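/- arXiv:1202.0322 — 8 statements merged into one kernel-verified Lean document; each statement's English description precedes it below -/
import Mathlib

section
/- Let ρ be a positive semidefinite d×d complex matrix and σ a positive definite d×d complex matrix. Then for every s ∈ (0,1], Tr[(σ^{-s/4} ρ^{(1+s)/2} σ^{-s/4})²] ≤ Tr[σ^{-s/2} ρ^{1+s} σ^{-s/2}]. (Equivalently, ψ̲(s|ρ‖σ) := log Tr[ρ^{(1+s)/2}σ^{-s/2}ρ^{(1+s)/2}σ^{-s/2}] is at most ψ(s|ρ‖σ) := log Tr[ρ^{1+s}σ^{-s}].) -/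
open scoped BigOperators ComplexOrder

/-- Matrix power of a Hermitian matrix, obtained by applying `t ↦ t ^ r`
(real power) to the eigenvalues; junk value `0` for non-Hermitian input. -/
noncomputable def mpow {d : ℕ} (A : Matrix (Fin d) (Fin d) ℂ) (r : ℝ) :
    Matrix (Fin d) (Fin d) ℂ :=
  if hA : A.IsHermitian then
    (hA.eigenvectorUnitary : Matrix (Fin d) (Fin d) ℂ) *
      Matrix.diagonal (fun i => ((hA.eigenvalues i ^ r : ℝ) : ℂ)) *
      star (hA.eigenvectorUnitary : Matrix (Fin d) (Fin d) ℂ)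
  else 0

open Matrix

lemma mpow_isHermitian {d : ℕ} {A : Matrix (Fin d) (Fin d) ℂ} (hA : A.IsHermitian) (r : ℝ) :
    (mpow A r).IsHermitian := by
  rw [mpow, dif_pos hA, Matrix.star_eq_conjTranspose]
  exact Matrix.isHermitian_mul_mul_conjTranspose _
    (Matrix.isHermitian_diagonal_iff.mpr fun i => Complex.conj_ofReal _)

lemma mpow_mul_mpow {d : ℕ} {A : Matrix (Fin d) (Fin d) ℂ} (hA : A.IsHermitian)
    (p q : ℝ) (h : ∀ i, hA.eigenvalues i ^ p * hA.eigenvalues i ^ q = hA.eigenvalues i ^ (p + q)) :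
    mpow A p * mpow A q = mpow A (p + q) := by
  rw [mpow, dif_pos hA, mpow, dif_pos hA, mpow, dif_pos hA]
  set U := (hA.eigenvectorUnitary : Matrix (Fin d) (Fin d) ℂ) with hUdef
  have hU : star U * U = 1 := Unitary.coe_star_mul_self _
  set Dp := Matrix.diagonal (fun i => ((hA.eigenvalues i ^ p : ℝ) : ℂ)) with hDp
  set Dq := Matrix.diagonal (fun i => ((hA.eigenvalues i ^ q : ℝ) : ℂ)) with hDq
  have hDpq : Dp * Dq = Matrix.diagonal (fun i => ((hA.eigenvalues i ^ (p + q) : ℝ) : ℂ)) := by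
    rw [hDp, hDq, Matrix.diagonal_mul_diagonal]
    have hf : (fun i => ((hA.eigenvalues i ^ p : ℝ) : ℂ) * ((hA.eigenvalues i ^ q : ℝ) : ℂ)) =
        fun i => ((hA.eigenvalues i ^ (p + q) : ℝ) : ℂ) :=
      funext fun i => by rw [← Complex.ofReal_mul, h i]
    rw [hf]
  calc U * Dp * star U * (U * Dq * star U)
      = U * Dp * (star U * U) * Dq * star U := by noncomm_ring
    _ = U * (Dp * Dq) * star U := by rw [hU]; noncomm_ring
    _ = _ := by rw [hDpq]

lemma trace_sq_le {d : ℕ} (X : Matrix (Fin d) (Fin d) ℂ) :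
    ((X * X).trace).re ≤ ((X * Xᴴ).trace).re := by
  have h1 : ((X * X).trace).re = ∑ i, ∑ j, (X i j * X j i).re := by
    simp [Matrix.trace, Matrix.diag, Matrix.mul_apply, Complex.re_sum]
  have h2 : ((X * Xᴴ).trace).re = ∑ i, ∑ j, Complex.normSq (X i j) := by
    simp only [Matrix.trace, Matrix.diag, Matrix.mul_apply, Matrix.conjTranspose_apply,
      Complex.re_sum]
    congr 1; funext i; congr 1; funext j
    rw [show star (X i j) = (starRingEnd ℂ) (X i j) from rfl, Complex.mul_conj]
    simp
  rw [h1, h2]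
  have key : ∀ i j, (X i j * X j i).re ≤
      (Complex.normSq (X i j) + Complex.normSq (X j i)) / 2 := by
    intro i j
    have h3 : (X i j * X j i).re ≤ ‖X i j * X j i‖ := Complex.re_le_norm _
    have h4 : ‖X i j * X j i‖ = ‖X i j‖ * ‖X j i‖ :=
      norm_mul _ _
    have h5 : Complex.normSq (X i j) = ‖X i j‖ ^ 2 := (Complex.sq_norm _).symm
    have h6 : Complex.normSq (X j i) = ‖X j i‖ ^ 2 := (Complex.sq_norm _).symm
    nlinarith [sq_nonneg (‖X i j‖ - ‖X j i‖)]
  calc ∑ i, ∑ j, (X i j * X j i).re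
      ≤ ∑ i, ∑ j, (Complex.normSq (X i j) + Complex.normSq (X j i)) / 2 := by
        apply Finset.sum_le_sum; intro i _
        exact Finset.sum_le_sum fun j _ => key i j
    _ = ∑ i, ∑ j, Complex.normSq (X i j) := by
        have hswap : ∑ i, ∑ j, Complex.normSq (X j i) = ∑ i, ∑ j, Complex.normSq (X i j) :=
          Finset.sum_comm
        simp only [div_eq_mul_inv, Finset.sum_add_distrib, ← Finset.sum_mul]
        rw [hswap]
        ring

theorem stmt_1 {d : ℕ} (hd : 1 ≤ d) (ρ σ : Matrix (Fin d) (Fin d) ℂ)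
    (hρ : ρ.PosSemidef) (hσ : σ.PosDef) (s : ℝ) (hs0 : 0 < s) (hs1 : s ≤ 1) :
    ((mpow σ (-s / 4) * mpow ρ ((1 + s) / 2) * mpow σ (-s / 4)) ^ 2).trace.re ≤
      (mpow σ (-s / 2) * mpow ρ (1 + s) * mpow σ (-s / 2)).trace.re := by
  have hσh : σ.IsHermitian := hσ.isHermitian
  have hρh : ρ.IsHermitian := hρ.isHermitian
  set A := mpow ρ ((1 + s) / 2) with hA
  set B := mpow σ (-s / 4) with hB
  set C := mpow σ (-s / 2) with hC
  have hBB : B * B = C := by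
    rw [hB, hC]
    conv_rhs => rw [show (-s/2 : ℝ) = -s/4 + -s/4 by ring]
    exact mpow_mul_mpow hσh (-s/4) (-s/4) (fun i => by
      rw [← Real.rpow_add (hσ.eigenvalues_pos i)])
  have hAA : A * A = mpow ρ (1 + s) := by
    rw [hA]
    conv_rhs => rw [show (1 + s : ℝ) = (1+s)/2 + (1+s)/2 by ring]
    exact mpow_mul_mpow hρh ((1+s)/2) ((1+s)/2) (fun i =>
      (Real.rpow_add' (hρ.eigenvalues_nonneg i) (by positivity)).symm)
  have hAh : A.IsHermitian := mpow_isHermitian hρh _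
  have hCh : C.IsHermitian := mpow_isHermitian hσh _
  have hL : ((B * A * B) ^ 2).trace = ((A * C) * (A * C)).trace := by
    rw [sq]
    rw [show B * A * B * (B * A * B) = B * (A * (B * B) * A * B) by noncomm_ring]
    rw [hBB, Matrix.trace_mul_comm]
    rw [show A * C * A * B * B = A * C * A * (B * B) by noncomm_ring, hBB]
    exact congrArg Matrix.trace (by noncomm_ring)
  have hR : (C * mpow ρ (1 + s) * C).trace = ((A * C) * (A * C)ᴴ).trace := by
    rw [← hAA, Matrix.conjTranspose_mul, hAh.eq, hCh.eq]
    rw [show (A*C)*(C*A) = A*(C*C*A) by noncomm_ring, Matrix.trace_mul_comm A (C*C*A)]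
    rw [show C*(A*A)*C = C*(A*A*C) by noncomm_ring, Matrix.trace_mul_comm C (A*A*C),
      show A*A*C*C = (A*A)*(C*C) by noncomm_ring, Matrix.trace_mul_comm (A*A) (C*C)]
    exact congrArg Matrix.trace (by noncomm_ring)
  rw [hL, hR]
  exact trace_sq_le (A * C)
end

section
/- Let P^{AE} be a sub-distribution on A × E and let s > 0. For every normalized distribution Q on E with Q(e) > 0 for all e, Σ_{a,e} P^{AE}(a,e)^{1+s} · Q(e)^{-s} ≥ ( Σ_{e∈E} ( Σ_{a∈A} P^{AE}(a,e)^{1+s} )^{1/(1+s)} )^{1+s}. Moreover, if the marginal P^E(e) := Σ_a P^{AE}(a,e) is strictly positive for every e, then equality holds for the particular choice Q*(e) := (Σ_a P^{AE}(a,e)^{1+s})^{1/(1+s)} / Σ_{e'} (Σ_a P^{AE}(a,e')^{1+s})^{1/(1+s)}. -/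
open scoped BigOperators

theorem stmt_3 {A E : Type*} [Fintype A] [Nonempty A] [Fintype E] [Nonempty E]
    (P : A × E → ℝ) (hP0 : ∀ x, 0 ≤ P x) (hP1 : ∑ x, P x ≤ 1)
    (s : ℝ) (hs : 0 < s) :
    (∀ Q : E → ℝ, (∀ e, 0 < Q e) → (∑ e, Q e) = 1 →
      (∑ e : E, (∑ a : A, P (a, e) ^ (1 + s)) ^ (1 / (1 + s))) ^ (1 + s) ≤
        ∑ a : A, ∑ e : E, P (a, e) ^ (1 + s) * Q e ^ (-s)) ∧
    ((∀ e : E, 0 < ∑ a, P (a, e)) →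
      ∑ a : A, ∑ e : E, P (a, e) ^ (1 + s) *
          ((∑ a', P (a', e) ^ (1 + s)) ^ (1 / (1 + s)) /
            ∑ e', (∑ a', P (a', e') ^ (1 + s)) ^ (1 / (1 + s))) ^ (-s) =
        (∑ e : E, (∑ a : A, P (a, e) ^ (1 + s)) ^ (1 / (1 + s))) ^ (1 + s)) := by
  set F : E → ℝ := fun e => ∑ a : A, P (a, e) ^ (1 + s) with hF
  have hs1 : (0:ℝ) < 1 + s := by linarith
  have hFnn : ∀ e, 0 ≤ F e := fun e =>
    Finset.sum_nonneg fun a _ => Real.rpow_nonneg (hP0 _) _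
  have hswap : ∀ g : E → ℝ,
      (∑ a : A, ∑ e : E, P (a, e) ^ (1 + s) * g e) = ∑ e : E, F e * g e := by
    intro g
    rw [Finset.sum_comm]
    exact Finset.sum_congr rfl fun e _ => by rw [← Finset.sum_mul]
  set T : ℝ := ∑ e : E, F e ^ (1 / (1 + s)) with hT
  constructor
  · intro Q hQ hQ1
    rw [hswap]
    set S : ℝ := ∑ e : E, F e * Q e ^ (-s) with hS
    have hSnn : 0 ≤ S :=
      Finset.sum_nonneg fun e _ => mul_nonneg (hFnn e)
        (Real.rpow_nonneg (hQ e).le _)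
    have hconj : Real.HolderConjugate (1 + s) ((1 + s) / s) := by
      rw [Real.holderConjugate_iff]
      constructor
      · linarith
      · field_simp
    have hholder := Real.inner_le_Lp_mul_Lq_of_nonneg (s := Finset.univ)
      (f := fun e => (F e * Q e ^ (-s)) ^ (1 / (1 + s)))
      (g := fun e => Q e ^ (s / (1 + s))) hconj
      (fun e _ => Real.rpow_nonneg (mul_nonneg (hFnn e) (Real.rpow_nonneg (hQ e).le _)) _)
      (fun e _ => Real.rpow_nonneg (hQ e).le _)
    have key : T ≤ S ^ (1 / (1 + s)) := by
      have h1 : ∀ e : E, (F e * Q e ^ (-s)) ^ (1 / (1 + s)) * Q e ^ (s / (1 + s)) =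
          F e ^ (1 / (1 + s)) := by
        intro e
        rw [Real.mul_rpow (hFnn e) (Real.rpow_nonneg (hQ e).le _),
          ← Real.rpow_mul (hQ e).le, mul_assoc, ← Real.rpow_add (hQ e)]
        have hz : -s * (1 / (1 + s)) + s / (1 + s) = 0 := by field_simp; ring
        rw [hz, Real.rpow_zero, mul_one]
      have h2 : ∀ e : E, ((F e * Q e ^ (-s)) ^ (1 / (1 + s))) ^ (1 + s) =
          F e * Q e ^ (-s) := by
        intro e
        rw [← Real.rpow_mul (mul_nonneg (hFnn e) (Real.rpow_nonneg (hQ e).le _)),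
          one_div, inv_mul_cancel₀ (ne_of_gt hs1), Real.rpow_one]
      have h3 : ∀ e : E, (Q e ^ (s / (1 + s))) ^ ((1 + s) / s) = Q e := by
        intro e
        rw [← Real.rpow_mul (hQ e).le, div_mul_div_comm, mul_comm s (1+s),
          div_self (by positivity), Real.rpow_one]
      simp only [h1, h2, h3] at hholder
      rw [hQ1, Real.one_rpow, mul_one] at hholder
      exact hholder
    calc T ^ (1 + s) ≤ (S ^ (1 / (1 + s))) ^ (1 + s) := by
          apply Real.rpow_le_rpow (Finset.sum_nonneg fun e _ => Real.rpow_nonneg (hFnn e) _)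
            key hs1.le
      _ = S := by
          rw [← Real.rpow_mul hSnn, one_div, inv_mul_cancel₀ (ne_of_gt hs1), Real.rpow_one]
  · intro hpos
    have hFpos : ∀ e, 0 < F e := by
      intro e
      obtain ⟨a, _, ha⟩ := Finset.exists_lt_of_sum_lt (f := fun _ : A => (0:ℝ))
        (by simpa using hpos e)
      exact Finset.sum_pos' (fun a' _ => Real.rpow_nonneg (hP0 _) _)
        ⟨a, Finset.mem_univ a, Real.rpow_pos_of_pos ha _⟩
    have hTpos : 0 < T :=
      Finset.sum_pos (fun e _ => Real.rpow_pos_of_pos (hFpos e) _) Finset.univ_nonempty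
    rw [hswap]
    have : ∀ e : E, F e * (F e ^ (1 / (1 + s)) / T) ^ (-s) = F e ^ (1 / (1 + s)) * T ^ s := by
      intro e
      rw [Real.div_rpow (Real.rpow_nonneg (hFnn e) _) hTpos.le,
        ← Real.rpow_mul (hFnn e), Real.rpow_neg hTpos.le, div_eq_mul_inv, inv_inv,
        ← mul_assoc]
      congr 1
      nth_rewrite 1 [← Real.rpow_one (F e)]
      rw [← Real.rpow_add (hFpos e)]
      congr 1
      field_simp
      ring
    show ∑ e, F e * (F e ^ (1 / (1 + s)) / T) ^ (-s) = T ^ (1 + s)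
    simp only [this, ← Finset.sum_mul]
    rw [← hT, Real.rpow_add hTpos, Real.rpow_one]
end

section
/- Let P be a sub-distribution on a product A × B × E of finite sets. Then for every t ∈ (0,1), Σ_{b∈B, e∈E} ( Σ_{a∈A} P(a,b,e)^{1/(1-t)} )^{1-t} ≤ |B|^t · Σ_{e∈E} ( Σ_{a∈A, b∈B} P(a,b,e)^{1/(1-t)} )^{1-t}. (Equivalently, e^{φ(t|A|B,E|P)} ≤ |B|^t · e^{φ(t|A,B|E|P)}.) -/
open scoped BigOperators

lemma aux_sum_rpow_le {B : Type*} [Fintype B] [Nonempty B] (f : B → ℝ)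
    (hf : ∀ b, 0 ≤ f b) {t : ℝ} (ht0 : 0 < t) (ht1 : t < 1) :
    ∑ b, f b ^ (1 - t) ≤ (Fintype.card B : ℝ) ^ t * (∑ b, f b) ^ (1 - t) := by
  set n : ℝ := (Fintype.card B : ℝ) with hn
  have hnpos : (0 : ℝ) < n := by simp [hn, Fintype.card_pos]
  have h1t : 0 < 1 - t := by linarith
  have hp : (1 : ℝ) ≤ 1 / (1 - t) := by
    rw [le_div_iff₀ h1t]; linarith
  have key := Real.arith_mean_le_rpow_mean (Finset.univ : Finset B)
    (fun _ => 1 / n) (fun b => f b ^ (1 - t))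
    (fun i _ => by positivity)
    (by rw [Finset.sum_const]; simp [hn])
    (fun i _ => Real.rpow_nonneg (hf i) _) hp
  have hz' : ∀ b : B, (f b ^ (1 - t)) ^ (1 / (1 - t)) = f b := by
    intro b
    rw [← Real.rpow_mul (hf b), mul_one_div, div_self h1t.ne', Real.rpow_one]
  simp only [hz'] at key
  rw [← Finset.mul_sum, ← Finset.mul_sum] at key
  have hsum : 0 ≤ ∑ b, f b := Finset.sum_nonneg fun b _ => hf b
  have hrhs : (1 / n * ∑ b, f b) ^ (1 / (1 / (1 - t)))
      = (1 / n) ^ (1 - t) * (∑ b, f b) ^ (1 - t) := by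
    rw [one_div_one_div, Real.mul_rpow (by positivity) hsum]
  rw [hrhs] at key
  calc ∑ b, f b ^ (1 - t) = n * (1 / n * ∑ b, f b ^ (1 - t)) := by
        field_simp
    _ ≤ n * ((1 / n) ^ (1 - t) * (∑ b, f b) ^ (1 - t)) :=
        mul_le_mul_of_nonneg_left key hnpos.le
    _ = n ^ t * (∑ b, f b) ^ (1 - t) := by
        rw [← mul_assoc]
        congr 1
        have h1 : (1 / n) ^ (1 - t) = n ^ (t - 1) := by
          rw [one_div, ← Real.rpow_neg_one n, ← Real.rpow_mul hnpos.le]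
          ring_nf
        rw [h1]
        nth_rewrite 1 [← Real.rpow_one n]
        rw [← Real.rpow_add hnpos]
        congr 1
        ring

theorem stmt_4 {A B E : Type*} [Fintype A] [Nonempty A] [Fintype B] [Nonempty B]
    [Fintype E] [Nonempty E]
    (P : A × B × E → ℝ) (hP0 : ∀ x, 0 ≤ P x) (hP1 : ∑ x, P x ≤ 1)
    (t : ℝ) (ht0 : 0 < t) (ht1 : t < 1) :
    ∑ b : B, ∑ e : E, (∑ a : A, P (a, b, e) ^ (1 / (1 - t))) ^ (1 - t) ≤
      (Fintype.card B : ℝ) ^ t *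
        ∑ e : E, (∑ a : A, ∑ b : B, P (a, b, e) ^ (1 / (1 - t))) ^ (1 - t) := by
  rw [Finset.sum_comm, Finset.mul_sum]
  refine Finset.sum_le_sum fun e _ => ?_
  rw [Finset.sum_comm]
  exact aux_sum_rpow_le (fun b => ∑ a, P (a, b, e) ^ (1 / (1 - t)))
    (fun b => Finset.sum_nonneg fun a _ => Real.rpow_nonneg (hP0 _) _) ht0 ht1
end

section
/- Let 𝔽_q be a finite field with q elements and n ≥ m ≥ 1. Let (X, w) be a finite probability space and for each x ∈ X let f_x : 𝔽_q^n → 𝔽_q^m be a surjective linear map. Assume the ensemble is universal₂, i.e. for all a₁ ≠ a₂ in 𝔽_q^n, Pr_X[f_X(a₁) = f_X(a₂)] ≤ q^{-m} (equivalently, Pr_X[a ∈ ker f_X] ≤ q^{-m} for every nonzero a). Then the ensemble of dual codes ((ker f_X)^⊥) is q-almost universal₂: for every nonzero y ∈ 𝔽_q^n, Pr_X[y ∈ (ker f_X)^⊥] ≤ q · q^{m−n}. -/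
open scoped BigOperators

open Classical in
/-- Probability of the event `p` with respect to the weight `w` on a finite index set. -/
noncomputable def prOf {X : Type*} [Fintype X] (w : X → ℝ) (p : X → Prop) : ℝ :=
  ∑ x, if p x then w x else 0

open Classical in
lemma prOf_congr' {X : Type*} [Fintype X] (w : X → ℝ) {p q : X → Prop}
    (h : ∀ x, p x ↔ q x) : prOf w p = prOf w q := by
  unfold prOf
  exact Finset.sum_congr rfl fun x _ => by simp [h x]

open Classical in
lemma prOf_nonneg' {X : Type*} [Fintype X] {w : X → ℝ} (hw : ∀ x, 0 ≤ w x)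
    (p : X → Prop) : 0 ≤ prOf w p :=
  Finset.sum_nonneg fun x _ => by split <;> simp [hw x]

lemma prOf_eq_sum {X : Type*} [Fintype X] (w : X → ℝ) (p : X → Prop) [DecidablePred p] :
    prOf w p = ∑ x, if p x then w x else 0 := by
  unfold prOf
  exact Finset.sum_congr rfl fun x _ => by by_cases h : p x <;> simp [h]

open Classical in
theorem stmt_5 {F : Type*} [Field F] [Fintype F] (n m : ℕ) (hm : 1 ≤ m) (hnm : m ≤ n)
    {X : Type*} [Fintype X] [Nonempty X] (w : X → ℝ)
    (hw0 : ∀ x, 0 ≤ w x) (hw1 : ∑ x, w x = 1)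
    (f : X → ((Fin n → F) →ₗ[F] (Fin m → F))) (hfsurj : ∀ x, Function.Surjective (f x))
    (huniv : ∀ a₁ a₂ : Fin n → F, a₁ ≠ a₂ →
      prOf w (fun x => f x a₁ = f x a₂) ≤ ((Fintype.card F : ℝ) ^ m)⁻¹) :
    ∀ y : Fin n → F, y ≠ 0 →
      prOf w (fun x => ∀ v : Fin n → F, f x v = 0 → ∑ i, v i * y i = 0) ≤
        (Fintype.card F : ℝ) * (Fintype.card F : ℝ) ^ m / (Fintype.card F : ℝ) ^ n := by
  intro y hy
  set q : ℕ := Fintype.card F with hq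
  have hq2 : 2 ≤ q := Fintype.one_lt_card
  set Q : ℝ := (q : ℝ) with hQ
  have hQ1 : (1:ℝ) < Q := by
    have : (2:ℝ) ≤ Q := by rw [hQ]; exact_mod_cast hq2
    linarith
  have hQ0 : (0:ℝ) < Q := by linarith
  -- the bilinear form against y
  set b : (Fin n → F) → F := fun v => ∑ i, v i * y i with hbdef
  have hb_sub : ∀ (u v : Fin n → F) (t : F), b (u - t • v) = b u - t * b v := by
    intro u v t
    simp only [hbdef, Finset.mul_sum, ← Finset.sum_sub_distrib]
    exact Finset.sum_congr rfl fun i _ => by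
      simp only [Pi.sub_apply, Pi.smul_apply, smul_eq_mul]; ring
  have hb_add : ∀ (u v : Fin n → F) (t : F), b (u + t • v) = b u + t * b v := by
    intro u v t
    simp only [hbdef, Finset.mul_sum, ← Finset.sum_add_distrib]
    exact Finset.sum_congr rfl fun i _ => by
      simp only [Pi.add_apply, Pi.smul_apply, smul_eq_mul]; ring
  -- the events and counts
  set E : X → Prop := fun x => ∀ v : Fin n → F, f x v = 0 → b v = 0 with hEdef
  set N : X → ℕ := fun x =>
    (Finset.univ.filter (fun v : Fin n → F => f x v = 0 ∧ b v = 0)).card with hNdef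
  set K : X → ℕ := fun x =>
    (Finset.univ.filter (fun v : Fin n → F => f x v = 0)).card with hKdef
  have hcardfun : Fintype.card (Fin n → F) = q ^ n := by
    simp [Fintype.card_fun, hq]
  have hcardfunm : Fintype.card (Fin m → F) = q ^ m := by
    simp [Fintype.card_fun, hq]
  -- (A) : q^n ≤ K x * q^m
  have hA : ∀ x, q ^ n ≤ K x * q ^ m := by
    intro x
    set s : (Fin m → F) → (Fin n → F) := Function.surjInv (hfsurj x) with hs
    have hfs : ∀ u, f x (s u) = u := fun u => Function.surjInv_eq (hfsurj x) u
    have key : (Finset.univ : Finset (Fin n → F)).card ≤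
        ((Finset.univ.filter (fun v : Fin n → F => f x v = 0)) ×ˢ
          (Finset.univ : Finset (Fin m → F))).card := by
      apply Finset.card_le_card_of_injOn (fun v => (v - s (f x v), f x v))
      · intro v _
        simp only [Finset.mem_coe, Finset.mem_product, Finset.mem_filter, Finset.mem_univ, true_and]
        refine ⟨?_, trivial⟩
        simp [map_sub, hfs]
      · intro v1 _ v2 _ h
        have h1 : v1 - s (f x v1) = v2 - s (f x v2) := congrArg Prod.fst h
        have h2 : f x v1 = f x v2 := congrArg Prod.snd h
        rw [h2] at h1
        exact sub_left_injective h1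
    rw [Finset.card_product, Finset.card_univ, Finset.card_univ, hcardfun, hcardfunm] at key
    exact key
  -- (B) : if E x then N x = K x
  have hB : ∀ x, E x → N x = K x := by
    intro x hEx
    have hfe : (Finset.univ.filter (fun v : Fin n → F => f x v = 0 ∧ b v = 0)) =
        (Finset.univ.filter (fun v : Fin n → F => f x v = 0)) := by
      ext v
      simp only [Finset.mem_filter, Finset.mem_univ, true_and]
      exact ⟨fun h => h.1, fun h => ⟨h, hEx v h⟩⟩
    simp only [hNdef, hKdef, hfe]
  -- (C) : if ¬ E x then K x ≤ N x * q
  have hC : ∀ x, ¬ E x → K x ≤ N x * q := by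
    intro x hEx
    simp only [hEdef, not_forall] at hEx
    obtain ⟨v₀, hv₀f, hv₀b⟩ := hEx
    have key : (Finset.univ.filter (fun v : Fin n → F => f x v = 0)).card ≤
        ((Finset.univ.filter (fun v : Fin n → F => f x v = 0 ∧ b v = 0)) ×ˢ
          (Finset.univ : Finset F)).card := by
      apply Finset.card_le_card_of_injOn (fun v => (v - (b v * (b v₀)⁻¹) • v₀, b v))
      · intro v hv
        simp only [Finset.mem_coe, Finset.mem_filter, Finset.mem_univ, true_and] at hv
        simp only [Finset.mem_coe, Finset.mem_product, Finset.mem_filter, Finset.mem_univ, true_and]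
        refine ⟨⟨?_, ?_⟩, trivial⟩
        · rw [map_sub, map_smul, hv, hv₀f, smul_zero, sub_zero]
        · rw [hb_sub]
          field_simp
          simp
      · intro v1 _ v2 _ h
        have h2 : b v1 = b v2 := congrArg Prod.snd h
        have h1 : v1 - (b v1 * (b v₀)⁻¹) • v₀ = v2 - (b v2 * (b v₀)⁻¹) • v₀ :=
          congrArg Prod.fst h
        rw [h2] at h1
        exact sub_left_injective h1
    rwa [Finset.card_product, Finset.card_univ] at key
  -- (F) : card of {v : b v = 0} * q ≤ q ^ n
  have hF : (Finset.univ.filter (fun v : Fin n → F => b v = 0)).card * q ≤ q ^ n := by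
    obtain ⟨i, hi⟩ : ∃ i, y i ≠ 0 := by
      by_contra h
      push_neg at h
      exact hy (funext h)
    set v₀ : Fin n → F := Pi.single i 1 with hv₀
    have hbv₀ : b v₀ = y i := by
      simp only [hbdef, hv₀]
      rw [Finset.sum_eq_single i]
      · simp
      · intro j _ hj; simp [Pi.single_apply, hj]
      · simp
    have key : ((Finset.univ.filter (fun v : Fin n → F => b v = 0)) ×ˢ
        (Finset.univ : Finset F)).card ≤ (Finset.univ : Finset (Fin n → F)).card := by
      apply Finset.card_le_card_of_injOn (fun p => p.1 + (p.2 * (b v₀)⁻¹) • v₀)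
      · intro p _; exact Finset.mem_univ _
      · intro p1 hp1 p2 hp2 h
        rw [Finset.mem_coe, Finset.mem_product, Finset.mem_filter] at hp1 hp2
        have hb1 : b (p1.1 + (p1.2 * (b v₀)⁻¹) • v₀) = p1.2 := by
          rw [hb_add, hp1.1.2, hbv₀]
          field_simp [hbv₀ ▸ hi]
          simp
        have hb2 : b (p2.1 + (p2.2 * (b v₀)⁻¹) • v₀) = p2.2 := by
          rw [hb_add, hp2.1.2, hbv₀]
          field_simp [hbv₀ ▸ hi]
          simp
        have h' : p1.1 + (p1.2 * (b v₀)⁻¹) • v₀ = p2.1 + (p2.2 * (b v₀)⁻¹) • v₀ := h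
        have h2 : p1.2 = p2.2 := by rw [← hb1, ← hb2, h']
        have h1 : p1.1 = p2.1 := by
          rw [h2] at h'
          exact add_right_cancel h'
        exact Prod.ext h1 h2
    rwa [Finset.card_product, Finset.card_univ, Finset.card_univ, hcardfun] at key
  -- sum swap
  have hswap : ∑ x, w x * (N x : ℝ) =
      ∑ v ∈ Finset.univ.filter (fun v : Fin n → F => b v = 0),
        prOf w (fun x => f x v = 0) := by
    have step1 : ∀ x, w x * (N x : ℝ) =
        ∑ v : Fin n → F, if f x v = 0 ∧ b v = 0 then w x else 0 := by
      intro x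
      rw [hNdef]
      simp only [Finset.card_filter]
      push_cast
      rw [Finset.mul_sum]
      exact Finset.sum_congr rfl fun v _ => by split <;> simp
    simp only [step1]
    rw [Finset.sum_comm]
    rw [Finset.sum_filter]
    apply Finset.sum_congr rfl
    intro v _
    by_cases hbv : b v = 0
    · simp only [hbv, and_true, if_true]
      rw [prOf_eq_sum]
    · simp [hbv]
  -- bound on the swapped sum
  have hone : prOf w (fun x => f x (0 : Fin n → F) = 0) = 1 := by
    rw [prOf_congr' w (q := fun _ => True) (fun x => by simp)]
    unfold prOf
    simpa using hw1
  have hterm : ∀ v : Fin n → F, v ≠ 0 →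
      prOf w (fun x => f x v = 0) ≤ (Q ^ m)⁻¹ := by
    intro v hv
    have := huniv v 0 hv
    rwa [prOf_congr' w (q := fun x => f x v = 0) (fun x => by simp)] at this
  have h0mem : (0 : Fin n → F) ∈ Finset.univ.filter (fun v : Fin n → F => b v = 0) := by
    simp [hbdef]
  have hsum_le : ∑ x, w x * (N x : ℝ) ≤ 1 + Q ^ n * (Q^m)⁻¹ * Q⁻¹ := by
    rw [hswap, ← Finset.add_sum_erase _ _ h0mem, hone]
    gcongr
    calc ∑ v ∈ (Finset.univ.filter (fun v : Fin n → F => b v = 0)).erase 0,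
          prOf w (fun x => f x v = 0)
        ≤ ((Finset.univ.filter (fun v : Fin n → F => b v = 0)).erase 0).card • (Q^m)⁻¹ := by
          apply Finset.sum_le_card_nsmul
          intro v hv
          exact hterm v (Finset.ne_of_mem_erase hv)
      _ ≤ (Finset.univ.filter (fun v : Fin n → F => b v = 0)).card * (Q^m)⁻¹ := by
          rw [nsmul_eq_mul]
          have hcc : (((Finset.univ.filter (fun v : Fin n → F => b v = 0)).erase 0).card : ℝ) ≤
              ((Finset.univ.filter (fun v : Fin n → F => b v = 0)).card : ℝ) := by
            exact_mod_cast Finset.card_erase_le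
          exact mul_le_mul_of_nonneg_right hcc (by positivity)
      _ ≤ Q ^ n * (Q^m)⁻¹ * Q⁻¹ := by
          have hcard : ((Finset.univ.filter (fun v : Fin n → F => b v = 0)).card : ℝ) ≤
              Q ^ n * Q⁻¹ := by
            rw [← div_eq_mul_inv, le_div_iff₀ hQ0, hQ]
            exact_mod_cast hF
          calc ((Finset.univ.filter (fun v : Fin n → F => b v = 0)).card : ℝ) * (Q^m)⁻¹
              ≤ (Q ^ n * Q⁻¹) * (Q^m)⁻¹ := by gcongr
            _ = Q ^ n * (Q^m)⁻¹ * Q⁻¹ := by ring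
  -- per-x inequality
  have hper : ∀ x, Q ^ n * (1 + (Q - 1) * (if E x then 1 else 0)) ≤ Q * Q ^ m * (N x : ℝ) := by
    intro x
    have hAx : (Q : ℝ) ^ n ≤ (K x : ℝ) * Q ^ m := by
      rw [hQ]
      exact_mod_cast hA x
    by_cases hEx : E x
    · have hNK : (N x : ℝ) = (K x : ℝ) := by exact_mod_cast hB x hEx
      rw [if_pos hEx, hNK]
      calc Q ^ n * (1 + (Q - 1) * 1) = Q ^ n * Q := by ring
        _ ≤ ((K x : ℝ) * Q ^ m) * Q := by gcongr
        _ = Q * Q ^ m * (K x : ℝ) := by ring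
    · have hKN : (K x : ℝ) ≤ (N x : ℝ) * Q := by
        rw [hQ]
        exact_mod_cast hC x hEx
      rw [if_neg hEx]
      calc Q ^ n * (1 + (Q - 1) * 0) = Q ^ n := by ring
        _ ≤ (K x : ℝ) * Q ^ m := hAx
        _ ≤ ((N x : ℝ) * Q) * Q ^ m := by gcongr
        _ = Q * Q ^ m * (N x : ℝ) := by ring
  -- sum the per-x inequality
  set P0 : ℝ := prOf w E with hP0
  have hP0nn : 0 ≤ P0 := prOf_nonneg' hw0 E
  have hsumper : Q ^ n * (1 + (Q - 1) * P0) ≤ Q * Q ^ m * ∑ x, w x * (N x : ℝ) := by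
    have hs : ∑ x, w x * (Q ^ n * (1 + (Q - 1) * (if E x then 1 else 0))) ≤
        ∑ x, w x * (Q * Q ^ m * (N x : ℝ)) :=
      Finset.sum_le_sum fun x _ => mul_le_mul_of_nonneg_left (hper x) (hw0 x)
    have hlhs : ∑ x, w x * (Q ^ n * (1 + (Q - 1) * (if E x then 1 else 0))) =
        Q ^ n * (1 + (Q - 1) * P0) := by
      have e1 : ∀ x, w x * (Q ^ n * (1 + (Q - 1) * (if E x then 1 else 0))) =
          Q ^ n * w x + Q ^ n * (Q - 1) * (if E x then w x else 0) := by
        intro x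
        by_cases hEx : E x
        · rw [if_pos hEx, if_pos hEx]; ring
        · rw [if_neg hEx, if_neg hEx]; ring
      simp only [e1]
      rw [Finset.sum_add_distrib, ← Finset.mul_sum, ← Finset.mul_sum, hw1]
      have : ∑ x, (if E x then w x else 0) = P0 := by
        rw [hP0]
        unfold prOf
        exact Finset.sum_congr rfl fun x _ => by by_cases hEx : E x <;> simp [hEx]
      rw [this]
      ring
    have hrhs : ∑ x, w x * (Q * Q ^ m * (N x : ℝ)) =
        Q * Q ^ m * ∑ x, w x * (N x : ℝ) := by
      rw [Finset.mul_sum]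
      exact Finset.sum_congr rfl fun x _ => by ring
    rw [hlhs, hrhs] at hs
    exact hs
  have hkey : Q ^ n * ((Q - 1) * P0) ≤ Q * Q ^ m := by
    have h2 : Q * Q ^ m * ∑ x, w x * (N x : ℝ) ≤
        Q * Q ^ m * (1 + Q ^ n * (Q ^ m)⁻¹ * Q⁻¹) :=
      mul_le_mul_of_nonneg_left hsum_le (by positivity)
    have h3 : Q * Q ^ m * (1 + Q ^ n * (Q ^ m)⁻¹ * Q⁻¹) = Q * Q ^ m + Q ^ n := by
      have hm0 : (Q : ℝ) ^ m ≠ 0 := by positivity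
      have hq0 : (Q : ℝ) ≠ 0 := ne_of_gt hQ0
      field_simp
    nlinarith [hsumper, h2, h3]
  -- conclude
  rw [div_eq_mul_inv]
  have hpn : (0:ℝ) < Q ^ n := pow_pos hQ0 n
  have hQ2 : (2:ℝ) ≤ Q := by rw [hQ]; exact_mod_cast hq2
  have hstep : P0 * Q ^ n ≤ Q * Q ^ m := by
    nlinarith [hkey, mul_nonneg (mul_nonneg hP0nn hpn.le) (by linarith : (0:ℝ) ≤ Q - 2)]
  calc P0 = P0 * Q ^ n * (Q ^ n)⁻¹ := by field_simp
    _ ≤ Q * Q ^ m * (Q ^ n)⁻¹ := by gcongr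
    _ = Q * Q ^ m * (Q ^ n)⁻¹ := rfl
end

section
/- Let 𝔽_q be a finite field with q elements, n ≥ 1, and 0 ≤ t ≤ n. Then there exists a linear subspace C ⊆ 𝔽_q^n with dim C = t such that for every nonzero x ∈ 𝔽_q^n, q^n · #{ y ∈ C : y has the same type as x } < (n+1)^{q−1} · q^t · #{ y ∈ 𝔽_q^n : y has the same type as x }. (Equivalently, ε(C) < (n+1)^{q−1}, where ε(C) := max over nonzero x of q^n·#{y ∈ C : y has the same type as x} / ( |C| · #{y ∈ 𝔽_q^n : y has the same type as x} ).) -/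
open scoped BigOperators

open Classical in
/-- Number of elements of a finite type satisfying a predicate. -/
noncomputable def cnt {Y : Type*} [Fintype Y] (p : Y → Prop) : ℕ :=
  (Finset.univ.filter p).card

/-- Two vectors have the same type (empirical distribution). -/
def sameType {F : Type*} {n : ℕ} (x y : Fin n → F) : Prop :=
  ∀ a : F, cnt (fun i => x i = a) = cnt (fun i => y i = a)

theorem cnt_eq_card {Y : Type*} [Fintype Y] (p : Y → Prop) [DecidablePred p] :
    cnt p = (Finset.univ.filter p).card := by
  unfold cnt
  congr 1
  exact Finset.filter_congr_decidable _ _ _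

theorem cnt_congr {Y : Type*} [Fintype Y] (p q : Y → Prop) (h : ∀ y, p y ↔ q y) :
    cnt p = cnt q := by
  have : p = q := funext fun y => propext (h y)
  rw [this]

theorem cnt_le {Y : Type*} [Fintype Y] (p : Y → Prop) : cnt p ≤ Fintype.card Y := by
  classical
  rw [cnt_eq_card]; exact Finset.card_filter_le _ _

/-- existence of a linear automorphism mapping a nonzero vector to a nonzero vector -/
theorem exists_lequiv {F V : Type*} [Field F] [AddCommGroup V] [Module F V]
    [FiniteDimensional F V] {y z : V} (hy : y ≠ 0) (hz : z ≠ 0) :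
    ∃ e : V ≃ₗ[F] V, e y = z := by
  classical
  have hyli : LinearIndepOn F id ({y} : Set V) :=
    (linearIndepOn_singleton_iff F).2 hy
  have hzli : LinearIndepOn F id ({z} : Set V) :=
    (linearIndepOn_singleton_iff F).2 hz
  let by' := Module.Basis.extend hyli
  let bz' := Module.Basis.extend hzli
  haveI : Fintype (hyli.extend (Set.subset_univ _)) := FiniteDimensional.fintypeBasisIndex by'
  haveI : Fintype (hzli.extend (Set.subset_univ _)) := FiniteDimensional.fintypeBasisIndex bz'
  have hcard : Fintype.card (hyli.extend (Set.subset_univ _))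
      = Fintype.card (hzli.extend (Set.subset_univ _)) := by
    rw [← Module.finrank_eq_card_basis by', ← Module.finrank_eq_card_basis bz']
  have hymem : y ∈ hyli.extend (Set.subset_univ _) :=
    hyli.subset_extend _ (Set.mem_singleton y)
  have hzmem : z ∈ hzli.extend (Set.subset_univ _) :=
    hzli.subset_extend _ (Set.mem_singleton z)
  let f := Fintype.equivOfCardEq hcard
  let σ := f.trans (Equiv.swap (f ⟨y, hymem⟩) ⟨z, hzmem⟩)
  refine ⟨by'.equiv bz' σ, ?_⟩
  have h1 : by' ⟨y, hymem⟩ = y := Module.Basis.extend_apply_self hyli ⟨y, hymem⟩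
  have h2 : bz' ⟨z, hzmem⟩ = z := Module.Basis.extend_apply_self hzli ⟨z, hzmem⟩
  calc (by'.equiv bz' σ) y = (by'.equiv bz' σ) (by' ⟨y, hymem⟩) := by rw [h1]
    _ = bz' (σ ⟨y, hymem⟩) := Module.Basis.equiv_apply _ _ _ _
    _ = bz' ⟨z, hzmem⟩ := by
        congr 1
        simp only [σ, Equiv.trans_apply, Equiv.swap_apply_left]
    _ = z := h2

/-- the type (empirical distribution restricted to nonzero letters) of a vector -/
noncomputable def theta {F : Type*} [Fintype F] {n : ℕ} [Zero F] (x : Fin n → F) :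
    {a : F // a ≠ 0} → Fin (n + 1) :=
  fun a => ⟨cnt (fun i => x i = a.1), Nat.lt_succ_of_le ((cnt_le _).trans_eq (Fintype.card_fin n))⟩

theorem sum_cnt {F : Type*} [Fintype F] {n : ℕ} (x : Fin n → F) :
    ∑ a : F, cnt (fun i => x i = a) = n := by
  classical
  have := Finset.card_eq_sum_card_fiberwise
    (f := x) (s := (Finset.univ : Finset (Fin n))) (t := Finset.univ)
    (fun i _ => Finset.mem_univ (x i))
  simp only [Finset.card_univ, Fintype.card_fin] at this
  calc ∑ a : F, cnt (fun i => x i = a)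
      = ∑ a : F, (Finset.univ.filter (fun i => x i = a)).card :=
        Finset.sum_congr rfl fun a _ => cnt_eq_card _
    _ = n := this.symm

theorem sameType_iff_theta {F : Type*} [Fintype F] [Zero F] {n : ℕ} (x y : Fin n → F) :
    sameType y x ↔ theta y = theta x := by
  classical
  constructor
  · intro h
    funext a
    exact Fin.ext (h a.1)
  · intro h a
    by_cases ha : a = 0
    · subst ha
      have hsy := sum_cnt y
      have hsx := sum_cnt x
      rw [← Finset.add_sum_erase Finset.univ _ (Finset.mem_univ (0 : F))] at hsy hsx
      have hrest : ∑ a ∈ Finset.univ.erase (0 : F), cnt (fun i => y i = a)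
          = ∑ a ∈ Finset.univ.erase (0 : F), cnt (fun i => x i = a) := by
        refine Finset.sum_congr rfl fun a ha' => ?_
        have hane : a ≠ 0 := (Finset.mem_erase.1 ha').1
        exact congrArg Fin.val (congrFun h ⟨a, hane⟩)
      omega
    · exact congrArg Fin.val (congrFun h ⟨a, ha⟩)

/-- same type as a nonzero vector implies nonzero -/
theorem sameType_ne_zero {F : Type*} [Fintype F] [Zero F] {n : ℕ} {x y : Fin n → F}
    (hx : x ≠ 0) (h : sameType y x) : y ≠ 0 := by
  classical
  intro hy0
  subst hy0
  apply hx
  have h0 := h 0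
  have hl : cnt (fun i => (0 : Fin n → F) i = 0) = n := by
    rw [cnt_eq_card]
    simp
  rw [hl] at h0
  have huniv : (Finset.univ.filter (fun i => x i = 0)) = Finset.univ := by
    apply Finset.eq_univ_of_card
    rw [← cnt_eq_card, ← h0, Fintype.card_fin]
  funext i
  have hi : i ∈ Finset.univ.filter (fun i => x i = 0) := by
    rw [huniv]; exact Finset.mem_univ i
  simpa using (Finset.mem_filter.1 hi).2

/-- there is a subspace of each dimension up to n -/
theorem exists_submodule_finrank (F : Type*) [Field F] (n t : ℕ) (ht : t ≤ n) :
    ∃ C : Submodule F (Fin n → F), Module.finrank F C = t := by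
  classical
  have hli : LinearIndependent F ((Pi.basisFun F (Fin n)) ∘ (Fin.castLE ht)) :=
    (Pi.basisFun F (Fin n)).linearIndependent.comp _ (Fin.castLE_injective ht)
  exact ⟨Submodule.span F (Set.range _),
    by rw [finrank_span_eq_card hli, Fintype.card_fin]⟩

set_option maxHeartbeats 1000000 in
theorem stmt_7 {F : Type*} [Field F] [Fintype F] (n t : ℕ) (hn : 1 ≤ n) (ht : t ≤ n) :
    ∃ C : Submodule F (Fin n → F), Module.finrank F C = t ∧
      ∀ x : Fin n → F, x ≠ 0 →
        Fintype.card F ^ n * cnt (fun y => y ∈ C ∧ sameType y x) <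
          (n + 1) ^ (Fintype.card F - 1) * Fintype.card F ^ t *
            cnt (fun y : Fin n → F => sameType y x) := by
  classical
  haveI : Fintype (Submodule F (Fin n → F)) :=
    Fintype.ofInjective (SetLike.coe) SetLike.coe_injective
  set q := Fintype.card F with hqdef
  have hq2 : 2 ≤ q := Fintype.one_lt_card
  have hK2 : 2 ≤ (n + 1) ^ (q - 1) := by
    calc (2:ℕ) = 2 ^ 1 := rfl
      _ ≤ (n+1) ^ 1 := Nat.pow_le_pow_left (by omega) 1
      _ ≤ (n+1) ^ (q-1) := Nat.pow_le_pow_right (by omega) (by omega)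
  rcases eq_or_lt_of_le ht with htn | htn
  · -- case t = n : take the whole space
    subst htn
    refine ⟨⊤, by rw [finrank_top]; exact Module.finrank_fin_fun F, ?_⟩
    intro x hx
    have hmem : cnt (fun y => y ∈ (⊤ : Submodule F (Fin t → F)) ∧ sameType y x)
        = cnt (fun y : Fin t → F => sameType y x) :=
      cnt_congr _ _ (fun y => by simp)
    rw [hmem]
    have hB : 1 ≤ cnt (fun y : Fin t → F => sameType y x) := by
      rw [@cnt_eq_card _ _ _ (Classical.decPred _)]
      exact Finset.card_pos.2 ⟨x, Finset.mem_filter.2 ⟨Finset.mem_univ x, fun a => rfl⟩⟩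
    have hqt : 0 < q ^ t := pow_pos (by omega) t
    set c := cnt (fun y : Fin t → F => sameType y x) with hcdef
    have h0 : 0 < q ^ t * c := Nat.mul_pos hqt hB
    calc q ^ t * c < 2 * (q ^ t * c) := by omega
      _ ≤ (t + 1) ^ (q - 1) * (q ^ t * c) := Nat.mul_le_mul_right _ hK2
      _ = (t + 1) ^ (q - 1) * q ^ t * c := (mul_assoc _ _ _).symm
  -- main case t < n
  set K := (n + 1) ^ (q - 1) with hKdef
  have hab : q ^ (n - t) * q ^ t = q ^ n := by
    rw [← pow_add, Nat.sub_add_cancel (le_of_lt htn)]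
  set S : Finset (Submodule F (Fin n → F)) :=
    Finset.univ.filter (fun C => Module.finrank F C = t) with hSdef
  have hmemS : ∀ C : Submodule F (Fin n → F), C ∈ S ↔ Module.finrank F C = t := by
    intro C; rw [hSdef]; simp
  set N : (Fin n → F) → ℕ := fun y => (S.filter (fun C => y ∈ C)).card with hNdef
  set T : ({a : F // a ≠ 0} → Fin (n+1)) → Finset (Fin n → F) :=
    fun τ => Finset.univ.filter (fun y => theta y = τ) with hTdef
  set A : Submodule F (Fin n → F) → ({a : F // a ≠ 0} → Fin (n+1)) → ℕ :=
    fun C τ => ((T τ).filter (fun y => y ∈ C)).card with hAdef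
  set B : ({a : F // a ≠ 0} → Fin (n+1)) → ℕ := fun τ => (T τ).card with hBdef
  set y₀ : Fin n → F := fun _ => 1 with hy₀def
  have hy₀ : y₀ ≠ 0 := fun h => one_ne_zero (congrFun h ⟨0, hn⟩)
  -- N is constant on nonzero vectors
  have hNconst : ∀ y : Fin n → F, y ≠ 0 → N y = N y₀ := by
    intro y hy
    obtain ⟨e, he⟩ := exists_lequiv (F := F) hy hy₀
    refine Finset.card_nbij' (fun C => Submodule.map (e : (Fin n → F) →ₗ[F] (Fin n → F)) C)
      (fun D => Submodule.map (e.symm : (Fin n → F) →ₗ[F] (Fin n → F)) D) ?_ ?_ ?_ ?_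
    · intro C hC
      obtain ⟨hCS, hyC⟩ := Finset.mem_filter.1 hC
      refine Finset.mem_filter.2 ⟨(hmemS _).2 ?_, ?_⟩
      · rw [LinearEquiv.finrank_map_eq]; exact (hmemS C).1 hCS
      · rw [← he]; exact Submodule.mem_map_of_mem hyC
    · intro D hD
      obtain ⟨hDS, hyD⟩ := Finset.mem_filter.1 hD
      refine Finset.mem_filter.2 ⟨(hmemS _).2 ?_, ?_⟩
      · rw [LinearEquiv.finrank_map_eq]; exact (hmemS D).1 hDS
      · have hsymm : e.symm y₀ = y := by rw [← he, LinearEquiv.symm_apply_apply]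
        rw [← hsymm]; exact Submodule.mem_map_of_mem hyD
    · intro C _
      ext v
      simp [Submodule.mem_map_equiv]
    · intro D _
      ext v
      simp [Submodule.mem_map_equiv]
  -- S is nonempty
  have hSpos : 0 < S.card := by
    obtain ⟨C₀, hC₀⟩ := exists_submodule_finrank F n t ht
    exact Finset.card_pos.2 ⟨C₀, (hmemS C₀).2 hC₀⟩
  -- each C in S has q^t elements
  have hcardC : ∀ C ∈ S, (Finset.univ.filter (fun y : Fin n → F => y ∈ C)).card = q ^ t := by
    intro C hC
    have hrk : Module.finrank F C = t := (hmemS C).1 hC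
    have hpow := Module.card_eq_pow_finrank (K := F) (V := C)
    rw [hrk] at hpow
    rw [← Fintype.card_subtype, ← hpow]
  -- the set of nonzero vectors
  set V₀ : Finset (Fin n → F) := Finset.univ.filter (fun y => y ≠ 0) with hV₀def
  have hV₀card : V₀.card = q ^ n - 1 := by
    rw [hV₀def, Finset.filter_ne', Finset.card_erase_of_mem (Finset.mem_univ _),
      Finset.card_univ]
    congr 1
    rw [Fintype.card_fun, Fintype.card_fin]
  -- double counting: N y₀ * (q^n - 1) = S.card * (q^t - 1)
  have hdc : N y₀ * (q ^ n - 1) = S.card * (q ^ t - 1) := by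
    have hswap : ∑ C ∈ S, (V₀.filter (fun y => y ∈ C)).card = ∑ y ∈ V₀, N y := by
      have h1 : ∀ C : Submodule F (Fin n → F), (V₀.filter (fun y => y ∈ C)).card
          = ∑ y ∈ V₀, (if y ∈ C then 1 else 0) := fun C => Finset.card_filter _ _
      have h2 : ∀ y : Fin n → F, N y = ∑ C ∈ S, (if y ∈ C then 1 else 0) := fun y =>
        Finset.card_filter _ _
      simp only [h1, h2]
      exact Finset.sum_comm
    have hleft : ∑ C ∈ S, (V₀.filter (fun y => y ∈ C)).card = S.card * (q ^ t - 1) := by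
      have hper : ∀ C ∈ S, (V₀.filter (fun y => y ∈ C)).card = q ^ t - 1 := by
        intro C hC
        have heq : V₀.filter (fun y => y ∈ C)
            = (Finset.univ.filter (fun y : Fin n → F => y ∈ C)).erase 0 := by
          ext v
          simp only [hV₀def, Finset.filter_filter, Finset.mem_filter, Finset.mem_erase,
            Finset.mem_univ, true_and]
        rw [heq, Finset.card_erase_of_mem (Finset.mem_filter.2 ⟨Finset.mem_univ _, C.zero_mem⟩),
          hcardC C hC]
      rw [Finset.sum_congr rfl hper, Finset.sum_const, smul_eq_mul]
    have hright : ∑ y ∈ V₀, N y = (q ^ n - 1) * N y₀ := by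
      rw [Finset.sum_congr rfl (fun y hy => hNconst y (Finset.mem_filter.1 hy).2),
        Finset.sum_const, smul_eq_mul, hV₀card]
    rw [mul_comm (N y₀) _, ← hright, ← hswap, hleft]
  -- key inequality : q^(n-t) * N y₀ < S.card
  have hkey : q ^ (n - t) * N y₀ < S.card := by
    have hb2 : 2 ≤ q ^ (n - t) := by
      calc (2:ℕ) ≤ q := hq2
        _ = q ^ 1 := (pow_one q).symm
        _ ≤ q ^ (n - t) := Nat.pow_le_pow_right (by omega) (by omega)
    have hble : q ^ (n - t) ≤ q ^ n := Nat.pow_le_pow_right (by omega) (by omega)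
    have h1 : (q ^ (n - t) * N y₀) * (q ^ n - 1) = S.card * (q ^ n - q ^ (n - t)) := by
      calc (q ^ (n - t) * N y₀) * (q ^ n - 1)
          = q ^ (n - t) * (N y₀ * (q ^ n - 1)) := by ring
        _ = q ^ (n - t) * (S.card * (q ^ t - 1)) := by rw [hdc]
        _ = S.card * (q ^ (n - t) * (q ^ t - 1)) := by ring
        _ = S.card * (q ^ (n - t) * q ^ t - q ^ (n - t)) := by
            rw [Nat.mul_sub, mul_one]
        _ = S.card * (q ^ n - q ^ (n - t)) := by rw [hab]
    have h2 : S.card * (q ^ n - q ^ (n - t)) < S.card * (q ^ n - 1) :=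
      mul_lt_mul_of_pos_left (by omega) hSpos
    exact Nat.lt_of_mul_lt_mul_right (h1 ▸ h2)
  -- the set of occurring types
  set Θ : Finset ({a : F // a ≠ 0} → Fin (n+1)) := V₀.image theta with hΘdef
  have hΘcard : Θ.card ≤ K := by
    calc Θ.card ≤ Fintype.card ({a : F // a ≠ 0} → Fin (n+1)) := Finset.card_le_univ _
      _ = (n+1) ^ (q - 1) := by
          rw [Fintype.card_fun, Fintype.card_fin]
          congr 1
          calc Fintype.card {a : F // a ≠ 0}
              = Fintype.card F - Fintype.card {a : F // a = 0} :=
                Fintype.card_subtype_compl _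
            _ = q - 1 := by rw [Fintype.card_subtype_eq]
      _ = K := rfl
  -- elements of an occurring type are nonzero
  have hTne : ∀ τ ∈ Θ, ∀ y ∈ T τ, y ≠ 0 := by
    intro τ hτ y hy
    obtain ⟨x, hxV, hxτ⟩ := Finset.mem_image.1 hτ
    have hx : x ≠ 0 := (Finset.mem_filter.1 hxV).2
    have hyτ : theta y = τ := (Finset.mem_filter.1 hy).2
    exact sameType_ne_zero hx ((sameType_iff_theta x y).2 (by rw [hyτ, ← hxτ]))
  have hBpos : ∀ τ ∈ Θ, 1 ≤ B τ := by
    intro τ hτ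
    obtain ⟨x, hxV, hxτ⟩ := Finset.mem_image.1 hτ
    exact Finset.card_pos.2 ⟨x, Finset.mem_filter.2 ⟨Finset.mem_univ _, hxτ⟩⟩
  -- averaging identity
  have hAsum : ∀ τ ∈ Θ, ∑ C ∈ S, A C τ = B τ * N y₀ := by
    intro τ hτ
    have hswap : ∑ C ∈ S, A C τ = ∑ y ∈ T τ, N y := by
      have h1 : ∀ C : Submodule F (Fin n → F), A C τ
          = ∑ y ∈ T τ, (if y ∈ C then 1 else 0) := fun C => Finset.card_filter _ _
      have h2 : ∀ y : Fin n → F, N y = ∑ C ∈ S, (if y ∈ C then 1 else 0) := fun y =>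
        Finset.card_filter _ _
      simp only [h1, h2]
      exact Finset.sum_comm
    rw [hswap, Finset.sum_congr rfl (fun y hy => hNconst y (hTne τ hτ y hy)),
      Finset.sum_const, smul_eq_mul]
  -- Markov bound for each type
  set bad : ({a : F // a ≠ 0} → Fin (n+1)) → Finset (Submodule F (Fin n → F)) :=
    fun τ => S.filter (fun C => K * q ^ t * B τ ≤ q ^ n * A C τ) with hbaddef
  have hMarkov : ∀ τ ∈ Θ, (bad τ).card * (K * q ^ t) ≤ q ^ n * N y₀ := by
    intro τ hτ
    have hsum1 : (bad τ).card * (K * q ^ t * B τ) ≤ ∑ C ∈ bad τ, q ^ n * A C τ := by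
      have hb := Finset.card_nsmul_le_sum (bad τ) (fun C => q ^ n * A C τ) (K * q ^ t * B τ)
        (fun C hC => (Finset.mem_filter.1 hC).2)
      simpa [smul_eq_mul] using hb
    have hsum2 : ∑ C ∈ bad τ, q ^ n * A C τ ≤ ∑ C ∈ S, q ^ n * A C τ :=
      Finset.sum_le_sum_of_subset (Finset.filter_subset _ _)
    have hsum3 : ∑ C ∈ S, q ^ n * A C τ = q ^ n * (B τ * N y₀) := by
      rw [← Finset.mul_sum, hAsum τ hτ]
    have hfin : (bad τ).card * (K * q ^ t) * B τ ≤ (q ^ n * N y₀) * B τ := by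
      calc (bad τ).card * (K * q ^ t) * B τ
          = (bad τ).card * (K * q ^ t * B τ) := by ring
        _ ≤ q ^ n * (B τ * N y₀) := le_trans hsum1 (le_trans hsum2 (le_of_eq hsum3))
        _ = (q ^ n * N y₀) * B τ := by ring
    exact Nat.le_of_mul_le_mul_right hfin (hBpos τ hτ)
  -- the bad set is small
  set badset : Finset (Submodule F (Fin n → F)) :=
    S.filter (fun C => ∃ τ ∈ Θ, K * q ^ t * B τ ≤ q ^ n * A C τ) with hbadsetdef
  have hsub : badset ⊆ Θ.biUnion bad := by
    intro C hC
    obtain ⟨hCS, τ, hτ, hineq⟩ := Finset.mem_filter.1 hC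
    exact Finset.mem_biUnion.2 ⟨τ, hτ, Finset.mem_filter.2 ⟨hCS, hineq⟩⟩
  have hbadlt : badset.card < S.card := by
    have h1 : badset.card * (K * q ^ t) ≤ (q ^ (n - t) * N y₀) * (K * q ^ t) := by
      calc badset.card * (K * q ^ t)
          ≤ (Θ.biUnion bad).card * (K * q ^ t) :=
            Nat.mul_le_mul_right _ (Finset.card_le_card hsub)
        _ ≤ (∑ τ ∈ Θ, (bad τ).card) * (K * q ^ t) :=
            Nat.mul_le_mul_right _ Finset.card_biUnion_le
        _ = ∑ τ ∈ Θ, (bad τ).card * (K * q ^ t) := Finset.sum_mul _ _ _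
        _ ≤ ∑ τ ∈ Θ, q ^ n * N y₀ := Finset.sum_le_sum hMarkov
        _ = Θ.card * (q ^ n * N y₀) := by rw [Finset.sum_const, smul_eq_mul]
        _ ≤ K * (q ^ n * N y₀) := Nat.mul_le_mul_right _ hΘcard
        _ = (q ^ (n - t) * N y₀) * (K * q ^ t) := by rw [← hab]; ring
    have h2 : badset.card ≤ q ^ (n - t) * N y₀ :=
      Nat.le_of_mul_le_mul_right h1 (by positivity)
    exact lt_of_le_of_lt h2 hkey
  -- extract a good subspace
  have hnotsub : ¬ S ⊆ badset := fun hss =>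
    absurd (Finset.card_le_card hss) (not_le.2 hbadlt)
  obtain ⟨C, hCS, hCnb⟩ := Finset.not_subset.1 hnotsub
  refine ⟨C, (hmemS C).1 hCS, ?_⟩
  intro x hx
  have hxV : x ∈ V₀ := Finset.mem_filter.2 ⟨Finset.mem_univ _, hx⟩
  have hτΘ : theta x ∈ Θ := Finset.mem_image_of_mem _ hxV
  have hlt : q ^ n * A C (theta x) < K * q ^ t * B (theta x) := by
    by_contra hle
    push_neg at hle
    exact hCnb (Finset.mem_filter.2 ⟨hCS, ⟨theta x, hτΘ, hle⟩⟩)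
  have hcntA : cnt (fun y => y ∈ C ∧ sameType y x) = A C (theta x) := by
    rw [@cnt_eq_card _ _ _ (Classical.decPred _), hAdef, hTdef]
    congr 1
    ext y
    simp only [Finset.filter_filter, Finset.mem_filter, Finset.mem_univ, true_and]
    constructor
    · rintro ⟨h1, h2⟩; exact ⟨(sameType_iff_theta x y).1 h2, h1⟩
    · rintro ⟨h1, h2⟩; exact ⟨h2, (sameType_iff_theta x y).2 h1⟩
  have hcntB : cnt (fun y : Fin n → F => sameType y x) = B (theta x) := by
    rw [@cnt_eq_card _ _ _ (Classical.decPred _), hBdef, hTdef]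
    congr 1
    ext y
    simp only [Finset.mem_filter, Finset.mem_univ, true_and]
    exact sameType_iff_theta x y
  rw [hcntA, hcntB]
  exact hlt
end

section
/- Let P^{AE} be a normalized distribution on A × E whose marginal satisfies P^E(e) > 0 for all e ∈ E, and let B be a finite set with |B| = M. For any ensemble (f_x : A → B)_{x∈X} of functions over a finite probability space (X,w), E_X [ I'(f_X(A)|E|P^{AE}) ] ≤ log( 1 + M · E_X [ d₂(f_X(A):E|P^{AE}‖P^E) ] ) ≤ M · E_X [ d₂(f_X(A):E|P^{AE}‖P^E) ]. -/
open scoped BigOperators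

open Classical in
/-- Pushforward `P^{f(A),E}(b,e) = Σ_{a : f(a)=b} P^{AE}(a,e)`. -/
noncomputable def push {A B E : Type*} [Fintype A] (f : A → B) (P : A × E → ℝ)
    (b : B) (e : E) : ℝ :=
  ∑ a, if f a = b then P (a, e) else 0

theorem stmt_10 {A B E : Type*} [Fintype A] [Nonempty A] [Fintype B] [Nonempty B]
    [Fintype E] [Nonempty E]
    (P : A × E → ℝ) (hP0 : ∀ x, 0 ≤ P x) (hP1 : ∑ x, P x = 1)
    (hPE : ∀ e : E, 0 < ∑ a, P (a, e))
    {X : Type*} [Fintype X] [Nonempty X] (w : X → ℝ)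
    (hw0 : ∀ x, 0 ≤ w x) (hw1 : ∑ x, w x = 1)
    (f : X → A → B) :
    (∑ x, w x *
        ∑ b : B, ∑ e : E, push (f x) P b e *
          Real.log ((Fintype.card B : ℝ) * push (f x) P b e / (∑ a, P (a, e))) ≤
      Real.log (1 + (Fintype.card B : ℝ) *
        ∑ x, w x *
          ∑ b : B, ∑ e : E,
            (push (f x) P b e - (∑ a, P (a, e)) / (Fintype.card B : ℝ)) ^ 2 *
              (∑ a, P (a, e))⁻¹)) ∧
    (Real.log (1 + (Fintype.card B : ℝ) *
        ∑ x, w x *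
          ∑ b : B, ∑ e : E,
            (push (f x) P b e - (∑ a, P (a, e)) / (Fintype.card B : ℝ)) ^ 2 *
              (∑ a, P (a, e))⁻¹) ≤
      (Fintype.card B : ℝ) *
        ∑ x, w x *
          ∑ b : B, ∑ e : E,
            (push (f x) P b e - (∑ a, P (a, e)) / (Fintype.card B : ℝ)) ^ 2 *
              (∑ a, P (a, e))⁻¹) := by
  classical
  set M : ℝ := (Fintype.card B : ℝ) with hMdef
  have hM0 : 0 < M := by
    have : 0 < Fintype.card B := Fintype.card_pos
    rw [hMdef]; exact_mod_cast this
  set PE : E → ℝ := fun e => ∑ a, P (a, e) with hPEdef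
  have hPE0 : ∀ e, 0 < PE e := hPE
  set Q : X → B → E → ℝ := fun x b e => push (f x) P b e with hQdef
  have hQ0 : ∀ x b e, 0 ≤ Q x b e := by
    intro x b e
    apply Finset.sum_nonneg
    intro a _
    split
    · exact hP0 _
    · exact le_rfl
  have hsumb : ∀ x e, ∑ b, Q x b e = PE e := by
    intro x e
    have : (∑ b, Q x b e) = ∑ b, ∑ a, if f x a = b then P (a, e) else 0 := rfl
    rw [this, Finset.sum_comm]
    simp [Finset.sum_ite_eq, hPEdef]
  have hPE1 : ∑ e, PE e = 1 := by
    rw [← hP1, Fintype.sum_prod_type]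
    simp only [hPEdef]
    exact Finset.sum_comm
  have hQ1 : ∀ x, ∑ b, ∑ e, Q x b e = 1 := by
    intro x
    rw [Finset.sum_comm]
    simp only [hsumb]
    exact hPE1
  -- key per-e identity
  have key : ∀ x e, ∑ b, (Q x b e - PE e / M) ^ 2 * (PE e)⁻¹
      = (∑ b, (Q x b e) ^ 2 * (PE e)⁻¹) - PE e / M := by
    intro x e
    have hpe : PE e ≠ 0 := (hPE0 e).ne'
    have expand : ∀ b, (Q x b e - PE e / M) ^ 2 * (PE e)⁻¹
        = (Q x b e) ^ 2 * (PE e)⁻¹ - 2 / M * Q x b e + PE e / M ^ 2 := by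
      intro b; field_simp; ring
    rw [Finset.sum_congr rfl (fun b _ => expand b), Finset.sum_add_distrib,
      Finset.sum_sub_distrib, ← Finset.mul_sum, hsumb, Finset.sum_const,
      Finset.card_univ, nsmul_eq_mul, ← hMdef]
    field_simp
    ring
  have hDx : ∀ x, (∑ b, ∑ e, (Q x b e - PE e / M) ^ 2 * (PE e)⁻¹)
      = (∑ b, ∑ e, (Q x b e) ^ 2 * (PE e)⁻¹) - 1 / M := by
    intro x
    rw [Finset.sum_comm, Finset.sum_congr rfl (fun e _ => key x e),
      Finset.sum_sub_distrib, ← Finset.sum_div, hPE1, Finset.sum_comm]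
  set D : ℝ := ∑ x, w x * ∑ b, ∑ e, (Q x b e - PE e / M) ^ 2 * (PE e)⁻¹ with hDdef
  have hD0 : 0 ≤ D := by
    apply Finset.sum_nonneg
    intro x _
    apply mul_nonneg (hw0 x)
    apply Finset.sum_nonneg; intro b _
    apply Finset.sum_nonneg; intro e _
    exact mul_nonneg (sq_nonneg _) (inv_nonneg.2 (hPE0 e).le)
  have hD : 1 + M * D = ∑ x, w x * ∑ b, ∑ e, M * ((Q x b e) ^ 2 * (PE e)⁻¹) := by
    have e1 : ∀ x, w x * ∑ b, ∑ e, M * ((Q x b e) ^ 2 * (PE e)⁻¹)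
        = M * (w x * ∑ b, ∑ e, (Q x b e) ^ 2 * (PE e)⁻¹) := by
      intro x
      simp only [← Finset.mul_sum]
      ring
    rw [Finset.sum_congr rfl (fun x _ => e1 x), ← Finset.mul_sum, hDdef,
      Finset.sum_congr rfl (fun x _ => by rw [hDx x])]
    have : ∑ x, w x * ((∑ b, ∑ e, (Q x b e) ^ 2 * (PE e)⁻¹) - 1 / M)
        = (∑ x, w x * (∑ b, ∑ e, (Q x b e) ^ 2 * (PE e)⁻¹)) - (∑ x, w x) * (1 / M) := by
      rw [Finset.sum_mul, ← Finset.sum_sub_distrib]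
      exact Finset.sum_congr rfl (fun x _ => by ring)
    rw [this, hw1]
    field_simp
    ring
  -- Jensen
  set r : X × B × E → ℝ := fun i => w i.1 * Q i.1 i.2.1 i.2.2 with hrdef
  set t : X × B × E → ℝ := fun i => M * Q i.1 i.2.1 i.2.2 / PE i.2.2 with htdef
  have hr0 : ∀ i, 0 ≤ r i := fun i => mul_nonneg (hw0 _) (hQ0 _ _ _)
  have hrsum : ∑ i, r i = 1 := by
    rw [Fintype.sum_prod_type]
    have : ∀ x : X, ∑ p : B × E, r (x, p) = w x := by
      intro x
      rw [Fintype.sum_prod_type]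
      simp only [hrdef, ← Finset.mul_sum]
      rw [hQ1 x, mul_one]
    rw [Finset.sum_congr rfl (fun x _ => this x), hw1]
  have hrt : ∑ i, r i * t i = 1 + M * D := by
    rw [hD, Fintype.sum_prod_type]
    apply Finset.sum_congr rfl
    intro x _
    rw [Fintype.sum_prod_type, Finset.mul_sum]
    apply Finset.sum_congr rfl
    intro b _
    rw [Finset.mul_sum]
    apply Finset.sum_congr rfl
    intro e _
    simp only [hrdef, htdef]
    field_simp
  have hLHS : (∑ x, w x * ∑ b : B, ∑ e : E, Q x b e * Real.log (M * Q x b e / PE e))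
      = ∑ i, r i * Real.log (t i) := by
    rw [Fintype.sum_prod_type]
    apply Finset.sum_congr rfl
    intro x _
    rw [Fintype.sum_prod_type, Finset.mul_sum]
    apply Finset.sum_congr rfl
    intro b _
    rw [Finset.mul_sum]
    apply Finset.sum_congr rfl
    intro e _
    simp only [hrdef, htdef]
    ring
  set s : Finset (X × B × E) := Finset.univ.filter (fun i => r i ≠ 0) with hsdef
  have hsub : s ⊆ Finset.univ := Finset.filter_subset _ _
  have hzero : ∀ i ∈ Finset.univ, i ∉ s → r i = 0 := by
    intro i _ hi
    by_contra h
    exact hi (Finset.mem_filter.2 ⟨Finset.mem_univ _, h⟩)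
  have hssum : ∑ i ∈ s, r i = 1 := by
    rw [← hrsum]
    exact Finset.sum_subset hsub (fun i h hi => hzero i h hi)
  have hmem : ∀ i ∈ s, t i ∈ Set.Ioi (0 : ℝ) := by
    intro i hi
    have hr : r i ≠ 0 := (Finset.mem_filter.1 hi).2
    have hQpos : 0 < Q i.1 i.2.1 i.2.2 := by
      rcases lt_or_eq_of_le (hQ0 i.1 i.2.1 i.2.2) with h | h
      · exact h
      · exfalso; apply hr; simp [hrdef, ← h]
    exact Set.mem_Ioi.2 (div_pos (mul_pos hM0 hQpos) (hPE0 _))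
  have jensen := (strictConcaveOn_log_Ioi.concaveOn).le_map_sum
    (fun i hi => hr0 i) hssum hmem
  simp only [smul_eq_mul] at jensen
  have hlogt : ∑ i ∈ s, r i * Real.log (t i) = ∑ i, r i * Real.log (t i) :=
    Finset.sum_subset hsub (fun i h hi => by rw [hzero i h hi, zero_mul])
  have hts : ∑ i ∈ s, r i * t i = ∑ i, r i * t i :=
    Finset.sum_subset hsub (fun i h hi => by rw [hzero i h hi, zero_mul])
  constructor
  · calc (∑ x, w x * ∑ b : B, ∑ e : E, Q x b e * Real.log (M * Q x b e / PE e))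
        = ∑ i ∈ s, r i * Real.log (t i) := by rw [hLHS, hlogt]
      _ ≤ Real.log (∑ i ∈ s, r i * t i) := jensen
      _ = Real.log (1 + M * D) := by rw [hts, hrt]
  · have hpos : 0 < 1 + M * D := by nlinarith
    have := Real.log_le_sub_one_of_pos hpos
    linarith
end

section
/- Let 𝔽_q be a finite field with q elements, n ≥ m ≥ 1, E a finite nonempty set, P^{AE} a sub-distribution on 𝔽_q^n × E, and Q a normalized distribution on E with Q(e) > 0 for all e. Let (f_x : 𝔽_q^n → 𝔽_q^m)_{x∈X} be an ensemble of surjective linear maps over a finite probability space (X,w) that is ε-almost dual universal₂: Pr_X[ y ∈ (ker f_X)^⊥ ] ≤ ε·q^{m−n} for every nonzero y. Set M := q^m. Then E_X [ d₁'(f_X(A)|E|P^{AE}) ] ≤ √ε · M^{1/2} · e^{−H₂(A|E|P^{AE}‖Q)/2}. Moreover, if P^{AE} is normalized with P^E(e) > 0 for all e, then E_X [ I'(f_X(A)|E|P^{AE}) ] ≤ log( 1 + ε·M·e^{−H₂(A|E|P^{AE}‖P^E)} ) ≤ ε·M·e^{−H₂(A|E|P^{AE}‖P^E)}. -/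
open scoped BigOperators

open Classical Finset

set_option linter.unusedSectionVars false

section Counting
variable {F : Type*} [Field F] [Fintype F] {n m : ℕ}

private lemma toDual_pi_apply (y v : Fin n → F) :
    (Pi.basisFun F (Fin n)).toDual y v = ∑ i, v i * y i := by
  have hv : v = ∑ i, v i • Pi.basisFun F (Fin n) i := by
    have := (Pi.basisFun F (Fin n)).sum_repr v
    simpa [Pi.basisFun_repr] using this.symm
  conv_lhs => rw [hv]
  rw [map_sum]
  refine Finset.sum_congr rfl fun i _ => ?_
  rw [map_smul, smul_eq_mul, Module.Basis.toDual_apply_left, Pi.basisFun_repr]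

private lemma card_ortho (U : Submodule F (Fin n → F)) :
    (Finset.univ.filter (fun y : Fin n → F => ∀ v ∈ U, ∑ i, v i * y i = 0)).card
      = Fintype.card F ^ (n - Module.finrank F U) := by
  set Φ : (Fin n → F) →ₗ[F] Module.Dual F U :=
    (U.subtype.dualMap).comp ((Pi.basisFun F (Fin n)).toDual) with hΦ
  have hmem : ∀ y : Fin n → F, (∀ v ∈ U, ∑ i, v i * y i = 0) ↔ y ∈ LinearMap.ker Φ := by
    intro y
    simp only [LinearMap.mem_ker, hΦ, LinearMap.comp_apply]
    constructor
    · intro h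
      ext ⟨v, hv⟩
      simpa [toDual_pi_apply] using h v hv
    · intro h v hv
      have := DFunLike.congr_fun h (⟨v, hv⟩ : U)
      simpa [toDual_pi_apply] using this
  have hsd : Function.Surjective ((Pi.basisFun F (Fin n)).toDual) := by
    intro φ
    obtain ⟨y, hy⟩ := (Pi.basisFun F (Fin n)).toDualEquiv.surjective φ
    exact ⟨y, by simpa [Module.Basis.toDualEquiv_apply] using hy⟩
  have hsurj : Function.Surjective Φ := by
    rw [hΦ, LinearMap.coe_comp]
    exact (LinearMap.dualMap_surjective_of_injective (Submodule.injective_subtype U)).comp hsd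
  have hrank : Module.finrank F (LinearMap.ker Φ) = n - Module.finrank F U := by
    have h1 := LinearMap.finrank_range_add_finrank_ker Φ
    rw [LinearMap.range_eq_top.mpr hsurj, finrank_top] at h1
    have h2 : Module.finrank F (Module.Dual F U) = Module.finrank F U :=
      Subspace.dual_finrank_eq
    have h3 : Module.finrank F (Fin n → F) = n := by simp
    omega
  have hcard : Fintype.card (LinearMap.ker Φ) = Fintype.card F ^ (n - Module.finrank F U) := by
    rw [Module.card_eq_pow_finrank (K := F) (V := LinearMap.ker Φ), hrank]
  rw [← hcard, Fintype.card_subtype]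
  refine Finset.card_bij (fun y _ => y) ?_ ?_ ?_
  · intro y hy
    simp only [Finset.mem_filter, Finset.mem_univ, true_and] at hy ⊢
    exact (hmem y).mp hy
  · intro a _ b _ h; exact h
  · intro y hy
    simp only [Finset.mem_filter, Finset.mem_univ, true_and] at hy
    exact ⟨y, by simp only [Finset.mem_filter, Finset.mem_univ, true_and]; exact (hmem y).mpr hy,
      rfl⟩

private lemma mem_le_ker_iff (W : Submodule F (Fin n → F)) (y : Fin n → F) :
    (∀ v ∈ W, ∑ i, v i * y i = 0) ↔ W ≤ LinearMap.ker ((Pi.basisFun F (Fin n)).toDual y) := by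
  constructor
  · intro h v hv
    simp only [LinearMap.mem_ker, toDual_pi_apply]
    exact h v hv
  · intro h v hv
    have := h hv
    simpa only [LinearMap.mem_ker, toDual_pi_apply] using this

private lemma card_filter_ne_zero {V : Type*} [Fintype V] [AddCommGroup V] [DecidableEq V]
    (P : V → Prop) [DecidablePred P] (hP0 : P 0) :
    ((Finset.univ.filter (fun y : V => y ≠ 0 ∧ P y)).card : ℝ)
      = ((Finset.univ.filter P).card : ℝ) - 1 := by
  have h1 : Finset.univ.filter (fun y : V => y ≠ 0 ∧ P y)
      = (Finset.univ.filter P).erase 0 := by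
    ext y; simp [Finset.mem_erase, and_comm]
  have hmem : (0 : V) ∈ Finset.univ.filter P := by simp [hP0]
  have hle : 1 ≤ (Finset.univ.filter P).card := Finset.card_pos.mpr ⟨0, hmem⟩
  rw [h1, Finset.card_erase_of_mem hmem, Nat.cast_sub hle, Nat.cast_one]

private lemma finrank_ker_surj (g : (Fin n → F) →ₗ[F] (Fin m → F))
    (hg : Function.Surjective g) :
    Module.finrank F (LinearMap.ker g) = n - m := by
  have h1 := LinearMap.finrank_range_add_finrank_ker g
  rw [LinearMap.range_eq_top.mpr hg, finrank_top] at h1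
  have h2 : Module.finrank F (Fin m → F) = m := by simp
  have h3 : Module.finrank F (Fin n → F) = n := by simp
  omega

private lemma cardL (hnm : m ≤ n) (g : (Fin n → F) →ₗ[F] (Fin m → F))
    (hg : Function.Surjective g) :
    (Finset.univ.filter (fun y : Fin n → F => ∀ v, g v = 0 → ∑ i, v i * y i = 0)).card
      = Fintype.card F ^ m := by
  have he : Finset.univ.filter (fun y : Fin n → F => ∀ v, g v = 0 → ∑ i, v i * y i = 0)
      = Finset.univ.filter
          (fun y : Fin n → F => ∀ v ∈ LinearMap.ker g, ∑ i, v i * y i = 0) := by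
    apply Finset.filter_congr; intro y _
    simp only [LinearMap.mem_ker]
  rw [he, card_ortho, finrank_ker_surj g hg]
  congr 1; omega

private lemma cardLv (hm : 1 ≤ m) (hnm : m ≤ n) (g : (Fin n → F) →ₗ[F] (Fin m → F))
    (hg : Function.Surjective g) (v : Fin n → F) (hv : g v ≠ 0) :
    (Finset.univ.filter (fun y : Fin n → F =>
        (∀ u, g u = 0 → ∑ i, u i * y i = 0) ∧ ∑ i, v i * y i = 0)).card
      = Fintype.card F ^ (m - 1) := by
  have hv0 : v ≠ 0 := fun h => hv (by simp [h])
  set U : Submodule F (Fin n → F) := LinearMap.ker g ⊔ (F ∙ v) with hU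
  have he : Finset.univ.filter (fun y : Fin n → F =>
        (∀ u, g u = 0 → ∑ i, u i * y i = 0) ∧ ∑ i, v i * y i = 0)
      = Finset.univ.filter (fun y : Fin n → F => ∀ u ∈ U, ∑ i, u i * y i = 0) := by
    apply Finset.filter_congr; intro y _
    rw [mem_le_ker_iff, hU, sup_le_iff, Submodule.span_singleton_le_iff_mem]
    rw [← mem_le_ker_iff]
    simp only [LinearMap.mem_ker, toDual_pi_apply]
  have hdisj : Disjoint (LinearMap.ker g) (F ∙ v) := by
    rw [Submodule.disjoint_span_singleton]
    intro hmem
    exact absurd (LinearMap.mem_ker.mp hmem) hv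
  have hrank : Module.finrank F U = n - m + 1 := by
    have h1 := Submodule.finrank_sup_add_finrank_inf_eq (LinearMap.ker g) (F ∙ v)
    rw [hdisj.eq_bot, finrank_bot, finrank_span_singleton hv0, finrank_ker_surj g hg] at h1
    rw [hU]
    omega
  rw [he, card_ortho, hrank]
  congr 1; omega

private lemma cardHyp (v : Fin n → F) (hv : v ≠ 0) :
    (Finset.univ.filter (fun y : Fin n → F => ∑ i, v i * y i = 0)).card
      = Fintype.card F ^ (n - 1) := by
  have he : Finset.univ.filter (fun y : Fin n → F => ∑ i, v i * y i = 0)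
      = Finset.univ.filter (fun y : Fin n → F => ∀ u ∈ (F ∙ v), ∑ i, u i * y i = 0) := by
    apply Finset.filter_congr; intro y _
    rw [mem_le_ker_iff, Submodule.span_singleton_le_iff_mem]
    simp only [LinearMap.mem_ker, toDual_pi_apply]
  rw [he, card_ortho, finrank_span_singleton hv]

end Counting

section Sums
variable {V γ : Type*} [Fintype V] [Fintype γ]

private lemma collapse (g : V → γ) (u : V → ℝ) :
    ∑ c : γ, (∑ a, if g a = c then u a else 0) ^ 2
      = ∑ a, ∑ a', if g a = g a' then u a * u a' else 0 := by
  have hinner : ∀ a a' : V,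
      (∑ c : γ, (if g a = c then u a else 0) * (if g a' = c then u a' else 0))
        = if g a = g a' then u a * u a' else 0 := by
    intro a a'
    rw [Finset.sum_eq_single (g a)]
    · rw [if_pos rfl]
      by_cases h : g a = g a'
      · rw [if_pos h.symm, if_pos h]
      · rw [if_neg (fun e => h e.symm), if_neg h, mul_zero]
    · intro c _ hc
      rw [if_neg (fun e => hc e.symm), zero_mul]
    · intro h; exact absurd (Finset.mem_univ _) h
  calc ∑ c : γ, (∑ a, if g a = c then u a else 0) ^ 2
      = ∑ c : γ, ∑ a, ∑ a',
          (if g a = c then u a else 0) * (if g a' = c then u a' else 0) := by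
        refine Finset.sum_congr rfl fun c _ => ?_
        rw [sq, Finset.sum_mul_sum]
    _ = ∑ a, ∑ a', ∑ c : γ,
          (if g a = c then u a else 0) * (if g a' = c then u a' else 0) := by
        rw [Finset.sum_comm]
        refine Finset.sum_congr rfl fun a _ => ?_
        rw [Finset.sum_comm]
    _ = ∑ a, ∑ a', if g a = g a' then u a * u a' else 0 :=
        Finset.sum_congr rfl fun a _ => Finset.sum_congr rfl fun a' _ => hinner a a'

private lemma sum_fiber (g : V → γ) (u : V → ℝ) :
    ∑ c : γ, (∑ a, if g a = c then u a else 0) = ∑ a, u a := by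
  rw [Finset.sum_comm]
  refine Finset.sum_congr rfl fun a _ => ?_
  simp [Finset.sum_ite_eq]

end Sums

section PT
variable {F : Type*} [Field F] [Fintype F] {n m : ℕ}

private lemma sum_ite_q_sub (cond D : (Fin n → F) → Prop) [DecidablePred cond]
    [DecidablePred D] :
    ∑ y : Fin n → F,
        (if cond y then ((Fintype.card F : ℝ) * (if D y then 1 else 0) - 1) else 0)
      = (Fintype.card F : ℝ) * ((Finset.univ.filter fun y => cond y ∧ D y).card : ℝ)
        - ((Finset.univ.filter fun y => cond y).card : ℝ) := by
  have h : ∀ y, (if cond y then ((Fintype.card F : ℝ) * (if D y then 1 else 0) - 1) else 0)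
      = (Fintype.card F : ℝ) * (if cond y ∧ D y then 1 else 0)
        - (if cond y then 1 else 0) := by
    intro y; by_cases hc : cond y <;> by_cases hd : D y <;> simp [hc, hd]
  rw [Finset.sum_congr rfl fun y _ => h y, Finset.sum_sub_distrib, ← Finset.mul_sum,
    Finset.sum_boole, Finset.sum_boole]

private lemma PT0 (v : Fin n → F) :
    ∑ y : Fin n → F,
        (if y ≠ 0 then
          ((Fintype.card F : ℝ) * (if ∑ i, v i * y i = 0 then 1 else 0) - 1) else 0)
      = if v = 0 then ((Fintype.card F : ℝ) - 1) * ((Fintype.card F : ℝ) ^ n - 1)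
        else -((Fintype.card F : ℝ) - 1) := by
  rw [sum_ite_q_sub]
  set q : ℝ := (Fintype.card F : ℝ) with hqdef
  have hcardV : ((Fintype.card (Fin n → F) : ℕ) : ℝ) = q ^ n := by
    rw [Fintype.card_fun, Fintype.card_fin]; push_cast; rfl
  by_cases hv : v = 0
  · subst hv
    have hD : ∀ y : Fin n → F, (∑ i, (0 : Fin n → F) i * y i = 0) := by
      intro y; simp
    have h1 : (Finset.univ.filter fun y : Fin n → F => y ≠ 0 ∧ ∑ i, (0 : Fin n → F) i * y i = 0)
        = Finset.univ.filter fun y : Fin n → F => y ≠ 0 ∧ True := by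
      apply Finset.filter_congr; intro y _; simp [hD y]
    have h2 : (Finset.univ.filter fun y : Fin n → F => y ≠ 0)
        = Finset.univ.filter fun y : Fin n → F => y ≠ 0 ∧ True := by
      apply Finset.filter_congr; intro y _; simp
    have h3 : ((Finset.univ.filter fun y : Fin n → F => y ≠ 0 ∧ True).card : ℝ)
        = q ^ n - 1 := by
      rw [card_filter_ne_zero (fun _ : Fin n → F => True) trivial]
      simp only [Finset.filter_true_of_mem (fun _ _ => trivial), Finset.card_univ]
      rw [hcardV]
    rw [h1, h2, h3, if_pos rfl]
    ring
  · have hn1 : 1 ≤ n := by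
      by_contra h
      push_neg at h
      interval_cases n
      · exact hv (funext fun i => absurd i.2 (by omega))
    have h1 : ((Finset.univ.filter fun y : Fin n → F =>
        y ≠ 0 ∧ ∑ i, v i * y i = 0).card : ℝ) = q ^ (n - 1) - 1 := by
      rw [card_filter_ne_zero (fun y : Fin n → F => ∑ i, v i * y i = 0) (by simp),
        cardHyp v hv]
      push_cast; rfl
    have h2 : ((Finset.univ.filter fun y : Fin n → F => y ≠ 0).card : ℝ) = q ^ n - 1 := by
      have h2' : (Finset.univ.filter fun y : Fin n → F => y ≠ 0)
          = Finset.univ.filter fun y : Fin n → F => y ≠ 0 ∧ True := by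
        apply Finset.filter_congr; intro y _; simp
      rw [h2', card_filter_ne_zero (fun _ : Fin n → F => True) trivial]
      simp only [Finset.filter_true_of_mem (fun _ _ => trivial), Finset.card_univ]
      rw [hcardV]
    rw [h1, h2, if_neg hv]
    have hpow : q * q ^ (n - 1) = q ^ n := by
      rw [← pow_succ']
      congr 1
      omega
    nlinarith [hpow]

private lemma PT (hm : 1 ≤ m) (hnm : m ≤ n) (g : (Fin n → F) →ₗ[F] (Fin m → F))
    (hg : Function.Surjective g) (v : Fin n → F) :
    ((Fintype.card F : ℝ) - 1) * (Fintype.card F : ℝ) ^ m * (if g v = 0 then 1 else 0)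
      = ((Fintype.card F : ℝ) - 1) + ∑ y : Fin n → F,
          (if y ≠ 0 ∧ (∀ u, g u = 0 → ∑ i, u i * y i = 0)
           then ((Fintype.card F : ℝ) * (if ∑ i, v i * y i = 0 then 1 else 0) - 1) else 0) := by
  rw [sum_ite_q_sub]
  set q : ℝ := (Fintype.card F : ℝ) with hqdef
  have hL0 : ∀ u, g u = 0 → ∑ i, u i * (0 : Fin n → F) i = 0 := by
    intro u _; simp
  have hN2 : ((Finset.univ.filter fun y : Fin n → F =>
      y ≠ 0 ∧ (∀ u, g u = 0 → ∑ i, u i * y i = 0)).card : ℝ) = q ^ m - 1 := by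
    rw [card_filter_ne_zero (fun y : Fin n → F => ∀ u, g u = 0 → ∑ i, u i * y i = 0) hL0,
      cardL hnm g hg]
    push_cast; rfl
  rw [hN2]
  by_cases hv : g v = 0
  · have h1 : (Finset.univ.filter fun y : Fin n → F =>
        (y ≠ 0 ∧ (∀ u, g u = 0 → ∑ i, u i * y i = 0)) ∧ ∑ i, v i * y i = 0)
        = Finset.univ.filter fun y : Fin n → F =>
            y ≠ 0 ∧ (∀ u, g u = 0 → ∑ i, u i * y i = 0) := by
      apply Finset.filter_congr; intro y _
      constructor
      · exact fun h => h.1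
      · intro h; exact ⟨h, h.2 v hv⟩
    rw [h1, hN2, if_pos hv]
    ring
  · have h1 : (Finset.univ.filter fun y : Fin n → F =>
        (y ≠ 0 ∧ (∀ u, g u = 0 → ∑ i, u i * y i = 0)) ∧ ∑ i, v i * y i = 0)
        = Finset.univ.filter fun y : Fin n → F =>
            y ≠ 0 ∧ ((∀ u, g u = 0 → ∑ i, u i * y i = 0) ∧ ∑ i, v i * y i = 0) := by
      apply Finset.filter_congr; intro y _
      rw [and_assoc]
    have h2 : ((Finset.univ.filter fun y : Fin n → F =>
        y ≠ 0 ∧ ((∀ u, g u = 0 → ∑ i, u i * y i = 0) ∧ ∑ i, v i * y i = 0)).card : ℝ)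
        = q ^ (m - 1) - 1 := by
      rw [card_filter_ne_zero
        (fun y : Fin n → F => (∀ u, g u = 0 → ∑ i, u i * y i = 0) ∧ ∑ i, v i * y i = 0)
        ⟨hL0, by simp⟩, cardLv hm hnm g hg v hv]
      push_cast; rfl
    rw [h1, h2, if_neg hv]
    have hpow : q * q ^ (m - 1) = q ^ m := by
      rw [← pow_succ']
      congr 1
      omega
    nlinarith [hpow]

end PT

open Classical in
noncomputable def ind (c : Prop) : ℝ := if c then 1 else 0

lemma ind_pos {c : Prop} (h : c) : ind c = 1 := by simp [ind, h]
lemma ind_neg {c : Prop} (h : ¬c) : ind c = 0 := by simp [ind, h]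
lemma ind_nonneg (c : Prop) : 0 ≤ ind c := by
  by_cases h : c
  · rw [ind_pos h]; norm_num
  · rw [ind_neg h]

lemma ind_congr {c d : Prop} (h : c ↔ d) : ind c = ind d := by
  by_cases hc : c
  · rw [ind_pos hc, ind_pos (h.mp hc)]
  · rw [ind_neg hc, ind_neg (fun hd => hc (h.mpr hd))]

lemma ite_zero_eq_ind {c : Prop} [Decidable c] (r : ℝ) :
    (if c then r else 0) = ind c * r := by
  by_cases h : c
  · rw [if_pos h, ind_pos h, one_mul]
  · rw [if_neg h, ind_neg h, zero_mul]


section KeyS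
variable {F : Type*} [Field F] [Fintype F] {n m : ℕ}

private lemma collapse_ind {V γ : Type*} [Fintype V] [Fintype γ] (g : V → γ) (u : V → ℝ) :
    ∑ c : γ, (∑ a, ind (g a = c) * u a) ^ 2
      = ∑ a, ∑ a', ind (g a = g a') * (u a * u a') := by
  have h := collapse g u
  simp only [ite_zero_eq_ind] at h
  exact h

private lemma sum_fiber_ind {V γ : Type*} [Fintype V] [Fintype γ] (g : V → γ) (u : V → ℝ) :
    ∑ c : γ, (∑ a, ind (g a = c) * u a) = ∑ a, u a := by
  have h := sum_fiber g u
  simp only [ite_zero_eq_ind] at h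
  exact h

private lemma PT_ind (hm : 1 ≤ m) (hnm : m ≤ n) (g : (Fin n → F) →ₗ[F] (Fin m → F))
    (hg : Function.Surjective g) (v : Fin n → F) :
    ((Fintype.card F : ℝ) - 1) * (Fintype.card F : ℝ) ^ m * ind (g v = 0)
      = ((Fintype.card F : ℝ) - 1) + ∑ y : Fin n → F,
          ind (y ≠ 0 ∧ (∀ u, g u = 0 → ∑ i, u i * y i = 0)) *
            ((Fintype.card F : ℝ) * ind (∑ i, v i * y i = 0) - 1) := by
  have h := PT hm hnm g hg v
  simp only [ite_zero_eq_ind] at h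
  simpa [mul_one] using h

private lemma PT0_ind (v : Fin n → F) :
    ∑ y : Fin n → F,
        ind (y ≠ 0) * ((Fintype.card F : ℝ) * ind (∑ i, v i * y i = 0) - 1)
      = ind (v = 0) * (((Fintype.card F : ℝ) - 1) * ((Fintype.card F : ℝ) ^ n - 1))
        + ind (¬ v = 0) * (-((Fintype.card F : ℝ) - 1)) := by
  have h := PT0 v
  simp only [ite_zero_eq_ind] at h
  simp only [mul_one] at h
  by_cases hv : v = 0
  · rw [if_pos hv] at h
    rw [ind_pos hv, ind_neg (fun hc => hc hv), one_mul, zero_mul, add_zero]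
    exact h
  · rw [if_neg hv] at h
    rw [ind_neg hv, ind_pos hv, one_mul, zero_mul, zero_add]
    exact h

private lemma key (hm : 1 ≤ m) (hnm : m ≤ n)
    {X : Type*} [Fintype X] (w : X → ℝ) (hw0 : ∀ x, 0 ≤ w x) (hw1 : ∑ x, w x = 1)
    (f : X → ((Fin n → F) →ₗ[F] (Fin m → F))) (hfsurj : ∀ x, Function.Surjective (f x))
    (ε : ℝ) (hε : 0 ≤ ε)
    (hdu : ∀ y : Fin n → F, y ≠ 0 →
      (∑ x, ind (∀ v, f x v = 0 → ∑ i, v i * y i = 0) * w x) ≤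
        ε * (Fintype.card F : ℝ) ^ m / (Fintype.card F : ℝ) ^ n)
    (p : (Fin n → F) → ℝ) (hp : ∀ a, 0 ≤ p a) :
    ∑ x, w x * ∑ b : Fin m → F, (∑ a, ind (f x a = b) * p a) ^ 2
      ≤ (∑ a, p a) ^ 2 / (Fintype.card F : ℝ) ^ m + ε * ∑ a, (p a) ^ 2 := by
  have hq1 : (1 : ℝ) < (Fintype.card F : ℝ) := by exact_mod_cast Fintype.one_lt_card
  have hqm : (0 : ℝ) < (Fintype.card F : ℝ) ^ m := by positivity
  have hqn : (0 : ℝ) < (Fintype.card F : ℝ) ^ n := by positivity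
  have hDiff : ∀ (a a' y : Fin n → F),
      (∑ i, (a - a') i * y i = 0) ↔ (∑ i, a i * y i = ∑ i, a' i * y i) := by
    intro a a' y
    have h : ∑ i, (a - a') i * y i = ∑ i, a i * y i - ∑ i, a' i * y i := by
      rw [← Finset.sum_sub_distrib]
      exact Finset.sum_congr rfl fun i _ => by simp [sub_mul]
    rw [h, sub_eq_zero]
  set S : (Fin n → F) → ℝ := fun y =>
    ∑ a, ∑ a', ind (∑ i, (a - a') i * y i = 0) * (p a * p a') with hSdef
  set s : ℝ := ∑ a, p a with hsdef
  set T : (Fin n → F) → ℝ := fun y => (Fintype.card F : ℝ) * S y - s ^ 2 with hTdef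
  have hTy : ∀ y, T y = (Fintype.card F : ℝ) * S y - s ^ 2 := fun _ => rfl
  have hSy : ∀ y, S y = ∑ a, ∑ a', ind (∑ i, (a - a') i * y i = 0) * (p a * p a') :=
    fun _ => rfl
  have hs2 : s ^ 2 = ∑ a, ∑ a', p a * p a' := by
    rw [sq, hsdef, Finset.sum_mul_sum]

  -- T is nonnegative
  have hT0 : ∀ y, 0 ≤ T y := by
    intro y
    have hco : S y = ∑ c : F, (∑ a, ind ((∑ i, a i * y i) = c) * p a) ^ 2 := by
      rw [collapse_ind (fun a : Fin n → F => ∑ i, a i * y i) p, hSy y]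
      exact Finset.sum_congr rfl fun a _ => Finset.sum_congr rfl fun a' _ =>
        congrArg (· * (p a * p a')) (ind_congr (hDiff a a' y))
    have hfib : ∑ c : F, (∑ a, ind ((∑ i, a i * y i) = c) * p a) = s :=
      sum_fiber_ind (fun a : Fin n → F => ∑ i, a i * y i) p
    have hCS := sq_sum_le_card_mul_sum_sq
      (s := (Finset.univ : Finset F))
      (f := fun c : F => ∑ a, ind ((∑ i, a i * y i) = c) * p a)
    rw [hfib, Finset.card_univ] at hCS
    rw [hTy y, sub_nonneg, hco]
    exact hCS
  -- expansion of indicator * T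
  have hTexp : ∀ (c : Prop) (y : Fin n → F),
      ind c * T y
        = ∑ a, ∑ a', (p a * p a') *
            (ind c * ((Fintype.card F : ℝ) * ind (∑ i, (a - a') i * y i = 0) - 1)) := by
    intro c y
    by_cases h : c
    · rw [ind_pos h]
      simp only [one_mul]
      rw [hTy y]
      have h1 : (Fintype.card F : ℝ) * S y = ∑ a, ∑ a',
          (Fintype.card F : ℝ) * (ind (∑ i, (a - a') i * y i = 0) * (p a * p a')) := by
        rw [hSy y, Finset.mul_sum]
        exact Finset.sum_congr rfl fun a _ => Finset.mul_sum _ _ _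
      rw [h1, hs2, ← Finset.sum_sub_distrib]
      refine Finset.sum_congr rfl fun a _ => ?_
      rw [← Finset.sum_sub_distrib]
      exact Finset.sum_congr rfl fun a' _ => by ring
    · rw [ind_neg h]
      simp only [zero_mul, mul_zero]
      symm
      exact Finset.sum_eq_zero fun a _ => Finset.sum_eq_zero fun a' _ => rfl
  -- swap-to-coefficients
  have hswap : ∀ (cnd : (Fin n → F) → Prop),
      ∑ y : Fin n → F, ind (cnd y) * T y
        = ∑ a, ∑ a', (p a * p a') *
            (∑ y : Fin n → F, ind (cnd y) *
              ((Fintype.card F : ℝ) * ind (∑ i, (a - a') i * y i = 0) - 1)) := by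
    intro cnd
    rw [Finset.sum_congr rfl fun y (_ : y ∈ Finset.univ) => hTexp (cnd y) y]
    rw [Finset.sum_comm]
    refine Finset.sum_congr rfl fun a _ => ?_
    rw [Finset.sum_comm]
    exact Finset.sum_congr rfl fun a' _ => (Finset.mul_sum _ _ _).symm
  -- G2 : total sum of T over nonzero y
  have hG2 : ∑ y : Fin n → F, ind (y ≠ 0) * T y
      = ((Fintype.card F : ℝ) - 1) * ((Fintype.card F : ℝ) ^ n * (∑ a, (p a) ^ 2) - s ^ 2) := by
    rw [hswap (fun y => y ≠ 0)]
    have h2 : ∀ a a' : Fin n → F,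
        (p a * p a') *
            (∑ y : Fin n → F, ind (y ≠ 0) *
              ((Fintype.card F : ℝ) * ind (∑ i, (a - a') i * y i = 0) - 1))
        = (p a * p a') * (-((Fintype.card F : ℝ) - 1))
          + ind (a = a') * ((p a * p a') *
              (((Fintype.card F : ℝ) - 1) * (Fintype.card F : ℝ) ^ n)) := by
      intro a a'
      rw [PT0_ind (a - a')]
      by_cases h : a = a'
      · rw [ind_pos (sub_eq_zero.mpr h), ind_neg (fun hc => hc (sub_eq_zero.mpr h)),
          ind_pos h]
        ring
      · rw [ind_neg (fun hz => h (sub_eq_zero.mp hz)),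
          ind_pos (fun hz => h (sub_eq_zero.mp hz)), ind_neg h]
        ring
    rw [Finset.sum_congr rfl fun a _ => Finset.sum_congr rfl fun a' _ => h2 a a']
    rw [Finset.sum_congr rfl fun a (_ : a ∈ Finset.univ) => Finset.sum_add_distrib,
      Finset.sum_add_distrib]
    have h3 : ∑ a : Fin n → F, ∑ a' : Fin n → F, (p a * p a') * (-((Fintype.card F : ℝ) - 1))
        = s ^ 2 * (-((Fintype.card F : ℝ) - 1)) := by
      rw [hs2, Finset.sum_mul]
      exact Finset.sum_congr rfl fun a _ => (Finset.sum_mul _ _ _).symm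
    have h4 : ∑ a : Fin n → F, ∑ a' : Fin n → F,
        ind (a = a') * ((p a * p a') *
            (((Fintype.card F : ℝ) - 1) * (Fintype.card F : ℝ) ^ n))
        = (∑ a, (p a) ^ 2) * (((Fintype.card F : ℝ) - 1) * (Fintype.card F : ℝ) ^ n) := by
      rw [Finset.sum_mul]
      refine Finset.sum_congr rfl fun a _ => ?_
      rw [Finset.sum_eq_single a]
      · rw [ind_pos rfl, one_mul, sq]
      · intro b _ hb
        rw [ind_neg (fun hc => hb hc.symm), zero_mul]
      · intro h; exact absurd (Finset.mem_univ a) h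
    rw [h3, h4]
    ring
  -- per-hash collapse
  have hpush : ∀ x, (∑ b : Fin m → F, (∑ a, ind (f x a = b) * p a) ^ 2)
      = ∑ a, ∑ a', ind (f x (a - a') = 0) * (p a * p a') := by
    intro x
    rw [collapse_ind (fun a => f x a) p]
    refine Finset.sum_congr rfl fun a _ => Finset.sum_congr rfl fun a' _ => ?_
    refine congrArg (· * (p a * p a')) (ind_congr ?_)
    rw [map_sub, sub_eq_zero]
  -- G3 : per-hash identity
  have hG3 : ∀ x, ((Fintype.card F : ℝ) - 1) * (Fintype.card F : ℝ) ^ m *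
        (∑ b : Fin m → F, (∑ a, ind (f x a = b) * p a) ^ 2)
      = ((Fintype.card F : ℝ) - 1) * s ^ 2
        + ∑ y : Fin n → F,
            ind (y ≠ 0 ∧ (∀ u, f x u = 0 → ∑ i, u i * y i = 0)) * T y := by
    intro x
    rw [hswap (fun y => y ≠ 0 ∧ (∀ u, f x u = 0 → ∑ i, u i * y i = 0))]
    have h2 : ∀ a a' : Fin n → F,
        (p a * p a') *
            (∑ y : Fin n → F,
              ind (y ≠ 0 ∧ (∀ u, f x u = 0 → ∑ i, u i * y i = 0)) *
                ((Fintype.card F : ℝ) * ind (∑ i, (a - a') i * y i = 0) - 1))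
        = ((Fintype.card F : ℝ) - 1) * (Fintype.card F : ℝ) ^ m *
            (ind (f x (a - a') = 0) * (p a * p a'))
          - (p a * p a') * ((Fintype.card F : ℝ) - 1) := by
      intro a a'
      have hPT := PT_ind hm hnm (f x) (hfsurj x) (a - a')
      have h5 : (∑ y : Fin n → F,
          ind (y ≠ 0 ∧ (∀ u, f x u = 0 → ∑ i, u i * y i = 0)) *
            ((Fintype.card F : ℝ) * ind (∑ i, (a - a') i * y i = 0) - 1))
          = ((Fintype.card F : ℝ) - 1) * (Fintype.card F : ℝ) ^ m *
              ind (f x (a - a') = 0) - ((Fintype.card F : ℝ) - 1) := by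
        linarith [hPT]
      rw [h5]
      ring
    rw [Finset.sum_congr rfl fun a _ => Finset.sum_congr rfl fun a' _ => h2 a a']
    rw [Finset.sum_congr rfl fun a (_ : a ∈ Finset.univ) => Finset.sum_sub_distrib _ _,
      Finset.sum_sub_distrib]
    have h3 : ∑ a : Fin n → F, ∑ a' : Fin n → F, (p a * p a') * ((Fintype.card F : ℝ) - 1)
        = s ^ 2 * ((Fintype.card F : ℝ) - 1) := by
      rw [hs2, Finset.sum_mul]
      exact Finset.sum_congr rfl fun a _ => (Finset.sum_mul _ _ _).symm
    have h4 : ∑ a : Fin n → F, ∑ a' : Fin n → F,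
        ((Fintype.card F : ℝ) - 1) * (Fintype.card F : ℝ) ^ m *
          (ind (f x (a - a') = 0) * (p a * p a'))
        = ((Fintype.card F : ℝ) - 1) * (Fintype.card F : ℝ) ^ m *
            ∑ a, ∑ a', ind (f x (a - a') = 0) * (p a * p a') := by
      rw [Finset.mul_sum]
      exact Finset.sum_congr rfl fun a _ => (Finset.mul_sum _ _ _).symm
    rw [h3, h4, hpush x]
    ring
  -- averaging over x
  have havg : ∑ x, w x * ∑ y : Fin n → F,
        ind (y ≠ 0 ∧ (∀ u, f x u = 0 → ∑ i, u i * y i = 0)) * T y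
      ≤ ((Fintype.card F : ℝ) - 1) * (ε * (Fintype.card F : ℝ) ^ m * ∑ a, (p a) ^ 2) := by
    have hsw : ∑ x, w x * ∑ y : Fin n → F,
          ind (y ≠ 0 ∧ (∀ u, f x u = 0 → ∑ i, u i * y i = 0)) * T y
        = ∑ y : Fin n → F, ind (y ≠ 0) *
            (T y * (∑ x, ind (∀ u, f x u = 0 → ∑ i, u i * y i = 0) * w x)) := by
      rw [Finset.sum_congr rfl fun x (_ : x ∈ Finset.univ) => Finset.mul_sum _ _ _,
        Finset.sum_comm]
      refine Finset.sum_congr rfl fun y _ => ?_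
      by_cases hy : y = 0
      · rw [ind_neg (fun hc => hc hy), zero_mul]
        refine Finset.sum_eq_zero fun x _ => ?_
        rw [ind_neg (fun hc => hc.1 hy), zero_mul, mul_zero]
      · rw [ind_pos hy, one_mul, Finset.mul_sum]
        refine Finset.sum_congr rfl fun x _ => ?_
        by_cases hL : ∀ u, f x u = 0 → ∑ i, u i * y i = 0
        · rw [ind_pos (⟨hy, hL⟩ : _ ∧ _), ind_pos hL]
          ring
        · rw [ind_neg (fun hc => hL hc.2), ind_neg hL]
          ring
    rw [hsw]
    calc ∑ y : Fin n → F, ind (y ≠ 0) *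
            (T y * (∑ x, ind (∀ u, f x u = 0 → ∑ i, u i * y i = 0) * w x))
        ≤ ∑ y : Fin n → F, ind (y ≠ 0) *
            (T y * (ε * (Fintype.card F : ℝ) ^ m / (Fintype.card F : ℝ) ^ n)) := by
          refine Finset.sum_le_sum fun y _ => ?_
          by_cases hy : y = 0
          · rw [ind_neg (fun hc => hc hy), zero_mul, zero_mul]
          · rw [ind_pos hy, one_mul, one_mul]
            exact mul_le_mul_of_nonneg_left (hdu y hy) (hT0 y)
      _ = (ε * (Fintype.card F : ℝ) ^ m / (Fintype.card F : ℝ) ^ n) *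
            ∑ y : Fin n → F, ind (y ≠ 0) * T y := by
          rw [Finset.mul_sum]
          exact Finset.sum_congr rfl fun y _ => by ring
      _ ≤ ((Fintype.card F : ℝ) - 1) * (ε * (Fintype.card F : ℝ) ^ m * ∑ a, (p a) ^ 2) := by
          rw [hG2]
          have hc : 0 ≤ ε * (Fintype.card F : ℝ) ^ m / (Fintype.card F : ℝ) ^ n := by
            positivity
          have hs0 : 0 ≤ s ^ 2 := sq_nonneg s
          have key1 : (ε * (Fintype.card F : ℝ) ^ m / (Fintype.card F : ℝ) ^ n) *
              (((Fintype.card F : ℝ) - 1) * ((Fintype.card F : ℝ) ^ n * (∑ a, (p a) ^ 2)))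
              = ((Fintype.card F : ℝ) - 1) *
                  (ε * (Fintype.card F : ℝ) ^ m * ∑ a, (p a) ^ 2) := by
            field_simp
          have key2 : 0 ≤ (ε * (Fintype.card F : ℝ) ^ m / (Fintype.card F : ℝ) ^ n) *
              (((Fintype.card F : ℝ) - 1) * s ^ 2) := by
            have h1 : (0:ℝ) ≤ (Fintype.card F : ℝ) - 1 := by linarith
            positivity
          nlinarith [key1, key2]
  -- put it together
  have hfinal : ((Fintype.card F : ℝ) - 1) * (Fintype.card F : ℝ) ^ m *
      (∑ x, w x * ∑ b : Fin m → F, (∑ a, ind (f x a = b) * p a) ^ 2)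
      ≤ ((Fintype.card F : ℝ) - 1) * (Fintype.card F : ℝ) ^ m *
        ((∑ a, p a) ^ 2 / (Fintype.card F : ℝ) ^ m + ε * ∑ a, (p a) ^ 2) := by
    have hlhs : ((Fintype.card F : ℝ) - 1) * (Fintype.card F : ℝ) ^ m *
        (∑ x, w x * ∑ b : Fin m → F, (∑ a, ind (f x a = b) * p a) ^ 2)
        = ∑ x, w x * (((Fintype.card F : ℝ) - 1) * (Fintype.card F : ℝ) ^ m *
            (∑ b : Fin m → F, (∑ a, ind (f x a = b) * p a) ^ 2)) := by
      rw [Finset.mul_sum]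
      exact Finset.sum_congr rfl fun x _ => by ring
    rw [hlhs, Finset.sum_congr rfl fun x (_ : x ∈ Finset.univ) =>
      congrArg (w x * ·) (hG3 x)]
    have hexp : ∑ x, w x * (((Fintype.card F : ℝ) - 1) * s ^ 2
          + ∑ y : Fin n → F,
              ind (y ≠ 0 ∧ (∀ u, f x u = 0 → ∑ i, u i * y i = 0)) * T y)
        = ((Fintype.card F : ℝ) - 1) * s ^ 2
          + ∑ x, w x * ∑ y : Fin n → F,
              ind (y ≠ 0 ∧ (∀ u, f x u = 0 → ∑ i, u i * y i = 0)) * T y := by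
      rw [Finset.sum_congr rfl fun x (_ : x ∈ Finset.univ) => mul_add (w x) _ _,
        Finset.sum_add_distrib, ← Finset.sum_mul, hw1]
      ring
    rw [hexp]
    have hrhs : ((Fintype.card F : ℝ) - 1) * (Fintype.card F : ℝ) ^ m *
        ((∑ a, p a) ^ 2 / (Fintype.card F : ℝ) ^ m + ε * ∑ a, (p a) ^ 2)
        = ((Fintype.card F : ℝ) - 1) * s ^ 2
          + ((Fintype.card F : ℝ) - 1) * (ε * (Fintype.card F : ℝ) ^ m * ∑ a, (p a) ^ 2) := by
      rw [hsdef]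
      field_simp
    rw [hrhs]
    exact add_le_add le_rfl havg
  have hC : (0 : ℝ) < ((Fintype.card F : ℝ) - 1) * (Fintype.card F : ℝ) ^ m := by
    have h1 : (0:ℝ) < (Fintype.card F : ℝ) - 1 := by linarith
    positivity
  exact le_of_mul_le_mul_left hfinal hC


end KeyS

section Main
variable {F : Type*} [Field F] [Fintype F] {n m : ℕ}

private lemma push_eq_ind {A B E' : Type*} [Fintype A] (f : A → B) (P : A × E' → ℝ)
    (b : B) (e : E') :
    push f P b e = ∑ a, ind (f a = b) * P (a, e) := by
  unfold push
  exact Finset.sum_congr rfl fun a _ => ite_zero_eq_ind _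

private lemma prOf_eq_ind {X : Type*} [Fintype X] (w : X → ℝ) (p : X → Prop) :
    prOf w p = ∑ x, ind (p x) * w x := by
  unfold prOf
  exact Finset.sum_congr rfl fun x _ => ite_zero_eq_ind _

private lemma cs_abs {β : Type*} [Fintype β] (g : β → ℝ) (Qf : β → ℝ) (hQ : ∀ z, 0 < Qf z) :
    ∑ z, |g z| ≤ Real.sqrt (∑ z, Qf z) * Real.sqrt (∑ z, (g z) ^ 2 * (Qf z)⁻¹) := by
  have hcs := Finset.sum_mul_sq_le_sq_mul_sq Finset.univ
    (fun z => |g z| * Real.sqrt (Qf z)⁻¹) (fun z => Real.sqrt (Qf z))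
  have h1 : ∀ z, |g z| * Real.sqrt (Qf z)⁻¹ * Real.sqrt (Qf z) = |g z| := by
    intro z
    rw [mul_assoc, Real.sqrt_inv, inv_mul_cancel₀ (ne_of_gt (Real.sqrt_pos.mpr (hQ z))),
      mul_one]
  have h2 : ∀ z, (|g z| * Real.sqrt (Qf z)⁻¹) ^ 2 = (g z) ^ 2 * (Qf z)⁻¹ := by
    intro z
    rw [mul_pow, sq_abs, Real.sq_sqrt (inv_nonneg.mpr (le_of_lt (hQ z)))]
  have h3 : ∀ z, (Real.sqrt (Qf z)) ^ 2 = Qf z := fun z => Real.sq_sqrt (le_of_lt (hQ z))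
  rw [Finset.sum_congr rfl fun z _ => h1 z, Finset.sum_congr rfl fun z _ => h2 z,
    Finset.sum_congr rfl fun z _ => h3 z] at hcs
  have habs : 0 ≤ ∑ z, |g z| := Finset.sum_nonneg fun z _ => abs_nonneg _
  calc ∑ z, |g z| = Real.sqrt ((∑ z, |g z|) ^ 2) := (Real.sqrt_sq habs).symm
    _ ≤ Real.sqrt ((∑ z, (g z) ^ 2 * (Qf z)⁻¹) * ∑ z, Qf z) := Real.sqrt_le_sqrt hcs
    _ = Real.sqrt (∑ z, Qf z) * Real.sqrt (∑ z, (g z) ^ 2 * (Qf z)⁻¹) := by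
        rw [mul_comm, Real.sqrt_mul (Finset.sum_nonneg fun z _ => le_of_lt (hQ z))]

private lemma avg_sqrt {X : Type*} [Fintype X] (w G : X → ℝ) (hw0 : ∀ x, 0 ≤ w x)
    (hw1 : ∑ x, w x = 1) (hG : ∀ x, 0 ≤ G x) :
    ∑ x, w x * Real.sqrt (G x) ≤ Real.sqrt (∑ x, w x * G x) := by
  have hcs := Finset.sum_mul_sq_le_sq_mul_sq Finset.univ
    (fun x => Real.sqrt (w x)) (fun x => Real.sqrt (w x) * Real.sqrt (G x))
  have h1 : ∀ x, Real.sqrt (w x) * (Real.sqrt (w x) * Real.sqrt (G x))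
      = w x * Real.sqrt (G x) := by
    intro x
    rw [← mul_assoc, Real.mul_self_sqrt (hw0 x)]
  have h2 : ∀ x, (Real.sqrt (w x)) ^ 2 = w x := fun x => Real.sq_sqrt (hw0 x)
  have h3 : ∀ x, (Real.sqrt (w x) * Real.sqrt (G x)) ^ 2 = w x * G x := by
    intro x
    rw [mul_pow, Real.sq_sqrt (hw0 x), Real.sq_sqrt (hG x)]
  rw [Finset.sum_congr rfl fun x _ => h1 x, Finset.sum_congr rfl fun x _ => h2 x,
    Finset.sum_congr rfl fun x _ => h3 x, hw1, one_mul] at hcs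
  have hnn : 0 ≤ ∑ x, w x * Real.sqrt (G x) :=
    Finset.sum_nonneg fun x _ => mul_nonneg (hw0 x) (Real.sqrt_nonneg _)
  calc ∑ x, w x * Real.sqrt (G x)
      = Real.sqrt ((∑ x, w x * Real.sqrt (G x)) ^ 2) := (Real.sqrt_sq hnn).symm
    _ ≤ Real.sqrt (∑ x, w x * G x) := Real.sqrt_le_sqrt hcs

private lemma sum2_split {β γ : Type*} [Fintype β] [Fintype γ] (g h k : β → γ → ℝ) :
    ∑ b, ∑ e, (g b e + h b e - k b e)
      = (∑ b, ∑ e, g b e) + (∑ b, ∑ e, h b e) - (∑ b, ∑ e, k b e) := by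
  simp [Finset.sum_add_distrib, Finset.sum_sub_distrib]

private lemma sum2_factor {β γ : Type*} [Fintype β] [Fintype γ] (L : ℝ) (g : β → γ → ℝ) :
    ∑ b, ∑ e, L * g b e = L * ∑ b, ∑ e, g b e := by
  simp [Finset.mul_sum]

private lemma avg_affine {X : Type*} [Fintype X] (w : X → ℝ) (hw1 : ∑ x, w x = 1)
    (A K B : ℝ) (G : X → ℝ) :
    ∑ x, w x * (A + K * G x - B) = A + K * (∑ x, w x * G x) - B := by
  have h : ∀ x, w x * (A + K * G x - B) = (A - B) * w x + K * (w x * G x) := fun x => by ring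
  rw [Finset.sum_congr rfl fun x _ => h x, Finset.sum_add_distrib, ← Finset.mul_sum,
    ← Finset.mul_sum, hw1]
  ring

end Main


set_option maxHeartbeats 1000000 in
theorem stmt_12 {F : Type*} [Field F] [Fintype F] (n m : ℕ) (hm : 1 ≤ m) (hnm : m ≤ n)
    {E : Type*} [Fintype E] [Nonempty E]
    (P : (Fin n → F) × E → ℝ) (hP0 : ∀ x, 0 ≤ P x) (hP1 : ∑ x, P x ≤ 1)
    (Q : E → ℝ) (hQ0 : ∀ e, 0 < Q e) (hQ1 : ∑ e, Q e = 1)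
    {X : Type*} [Fintype X] [Nonempty X] (w : X → ℝ)
    (hw0 : ∀ x, 0 ≤ w x) (hw1 : ∑ x, w x = 1)
    (f : X → ((Fin n → F) →ₗ[F] (Fin m → F))) (hfsurj : ∀ x, Function.Surjective (f x))
    (ε : ℝ) (hε : 0 ≤ ε)
    (hdu : ∀ y : Fin n → F, y ≠ 0 →
      prOf w (fun x => ∀ v : Fin n → F, f x v = 0 → ∑ i, v i * y i = 0) ≤
        ε * (Fintype.card F : ℝ) ^ m / (Fintype.card F : ℝ) ^ n) :
    (∑ x, w x *
        ∑ b : Fin m → F, ∑ e : E,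
          |push (f x) P b e - (∑ a, P (a, e)) / (Fintype.card F : ℝ) ^ m| ≤
      Real.sqrt ε * Real.sqrt ((Fintype.card F : ℝ) ^ m) *
        Real.sqrt (∑ a : Fin n → F, ∑ e : E, P (a, e) ^ 2 * (Q e)⁻¹)) ∧
    ((∑ x, P x) = 1 → (∀ e : E, 0 < ∑ a, P (a, e)) →
      (∑ x, w x *
          ∑ b : Fin m → F, ∑ e : E, push (f x) P b e *
            Real.log ((Fintype.card F : ℝ) ^ m * push (f x) P b e / (∑ a, P (a, e))) ≤
        Real.log (1 + ε * (Fintype.card F : ℝ) ^ m *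
          ∑ a : Fin n → F, ∑ e : E, P (a, e) ^ 2 * (∑ a', P (a', e))⁻¹)) ∧
      (Real.log (1 + ε * (Fintype.card F : ℝ) ^ m *
          ∑ a : Fin n → F, ∑ e : E, P (a, e) ^ 2 * (∑ a', P (a', e))⁻¹) ≤
        ε * (Fintype.card F : ℝ) ^ m *
          ∑ a : Fin n → F, ∑ e : E, P (a, e) ^ 2 * (∑ a', P (a', e))⁻¹)) := by
  have hq1 : (1 : ℝ) < (Fintype.card F : ℝ) := by exact_mod_cast Fintype.one_lt_card
  have hM : (0 : ℝ) < (Fintype.card F : ℝ) ^ m := by positivity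
  have hMne : ((Fintype.card F : ℝ) ^ m) ≠ 0 := ne_of_gt hM
  have hcardb : ((Fintype.card (Fin m → F) : ℕ) : ℝ) = (Fintype.card F : ℝ) ^ m := by
    rw [Fintype.card_fun, Fintype.card_fin]; push_cast; rfl
  -- dual universality in ind form
  have hdu' : ∀ y : Fin n → F, y ≠ 0 →
      (∑ x, ind (∀ v, f x v = 0 → ∑ i, v i * y i = 0) * w x) ≤
        ε * (Fintype.card F : ℝ) ^ m / (Fintype.card F : ℝ) ^ n := by
    intro y hy
    rw [← prOf_eq_ind]
    exact hdu y hy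
  -- the key second-moment bound, per e
  have hkeyE : ∀ e : E, ∑ x, w x * ∑ b : Fin m → F, (push (f x) P b e) ^ 2
      ≤ (∑ a, P (a, e)) ^ 2 / (Fintype.card F : ℝ) ^ m + ε * ∑ a, (P (a, e)) ^ 2 := by
    intro e
    have h := key hm hnm w hw0 hw1 f hfsurj ε hε hdu' (fun a => P (a, e))
      (fun a => hP0 _)
    calc ∑ x, w x * ∑ b : Fin m → F, (push (f x) P b e) ^ 2
        = ∑ x, w x * ∑ b : Fin m → F, (∑ a, ind (f x a = b) * P (a, e)) ^ 2 := by
          refine Finset.sum_congr rfl fun x _ => congrArg (w x * ·) ?_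
          exact Finset.sum_congr rfl fun b _ => by rw [push_eq_ind]
      _ ≤ _ := h
  have hpush0 : ∀ x b e, 0 ≤ push (f x) P b e := by
    intro x b e
    rw [push_eq_ind]
    exact Finset.sum_nonneg fun a _ => mul_nonneg (ind_nonneg _) (hP0 _)
  have hsum_push : ∀ (x : X) (e : E), ∑ b : Fin m → F, push (f x) P b e = ∑ a, P (a, e) := by
    intro x e
    calc ∑ b : Fin m → F, push (f x) P b e
        = ∑ b : Fin m → F, ∑ a, ind (f x a = b) * P (a, e) :=
          Finset.sum_congr rfl fun b _ => push_eq_ind _ _ _ _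
      _ = ∑ a, P (a, e) := sum_fiber_ind (fun a => f x a) _
  -- variance identity
  have hvar : ∀ (x : X) (e : E),
      ∑ b : Fin m → F, (push (f x) P b e - (∑ a, P (a, e)) / (Fintype.card F : ℝ) ^ m) ^ 2
      = (∑ b : Fin m → F, (push (f x) P b e) ^ 2)
        - (∑ a, P (a, e)) ^ 2 / (Fintype.card F : ℝ) ^ m := by
    intro x e
    have hexp : ∀ b : Fin m → F,
        (push (f x) P b e - (∑ a, P (a, e)) / (Fintype.card F : ℝ) ^ m) ^ 2
        = (push (f x) P b e) ^ 2
          - 2 * ((∑ a, P (a, e)) / (Fintype.card F : ℝ) ^ m) * push (f x) P b e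
          + ((∑ a, P (a, e)) / (Fintype.card F : ℝ) ^ m) ^ 2 := fun b => by ring
    rw [Finset.sum_congr rfl fun b _ => hexp b, Finset.sum_add_distrib,
      Finset.sum_sub_distrib, ← Finset.mul_sum, hsum_push x e, Finset.sum_const,
      Finset.card_univ, nsmul_eq_mul, hcardb]
    field_simp
    ring
  -- weighted second-moment bound per e
  have hwvar : ∀ e : E,
      ∑ x, w x * ∑ b : Fin m → F,
        (push (f x) P b e - (∑ a, P (a, e)) / (Fintype.card F : ℝ) ^ m) ^ 2
      ≤ ε * ∑ a, (P (a, e)) ^ 2 := by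
    intro e
    have h1 : ∑ x, w x * ∑ b : Fin m → F,
        (push (f x) P b e - (∑ a, P (a, e)) / (Fintype.card F : ℝ) ^ m) ^ 2
        = (∑ x, w x * ∑ b : Fin m → F, (push (f x) P b e) ^ 2)
          - (∑ a, P (a, e)) ^ 2 / (Fintype.card F : ℝ) ^ m := by
      rw [Finset.sum_congr rfl fun x (_ : x ∈ Finset.univ) =>
        congrArg (w x * ·) (hvar x e)]
      rw [Finset.sum_congr rfl fun x (_ : x ∈ Finset.univ) => mul_sub (w x) _ _,
        Finset.sum_sub_distrib, ← Finset.sum_mul, hw1, one_mul]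
    rw [h1]
    have := hkeyE e
    linarith
  refine ⟨?_, ?_⟩
  · -- part 1
    have hQsum : ∑ b : Fin m → F, ∑ e : E, Q e = (Fintype.card F : ℝ) ^ m := by
      calc ∑ b : Fin m → F, ∑ e : E, Q e = ∑ b : Fin m → F, (1 : ℝ) :=
            Finset.sum_congr rfl fun _ _ => hQ1
        _ = (Fintype.card F : ℝ) ^ m := by
            rw [Finset.sum_const, Finset.card_univ, nsmul_eq_mul, mul_one, hcardb]
    have hstep1 : ∀ x : X,
        ∑ b : Fin m → F, ∑ e : E,
          |push (f x) P b e - (∑ a, P (a, e)) / (Fintype.card F : ℝ) ^ m|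
        ≤ Real.sqrt ((Fintype.card F : ℝ) ^ m) *
            Real.sqrt (∑ b : Fin m → F, ∑ e : E,
              (push (f x) P b e - (∑ a, P (a, e)) / (Fintype.card F : ℝ) ^ m) ^ 2
                * (Q e)⁻¹) := by
      intro x
      have h := cs_abs (β := (Fin m → F) × E)
        (fun z => push (f x) P z.1 z.2 - (∑ a, P (a, z.2)) / (Fintype.card F : ℝ) ^ m)
        (fun z => Q z.2) (fun z => hQ0 z.2)
      simp only [Fintype.sum_prod_type] at h
      rw [hQsum] at h
      exact h
    have hGp0 : ∀ x : X, 0 ≤ ∑ b : Fin m → F, ∑ e : E,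
        (push (f x) P b e - (∑ a, P (a, e)) / (Fintype.card F : ℝ) ^ m) ^ 2 * (Q e)⁻¹ :=
      fun x => Finset.sum_nonneg fun b _ => Finset.sum_nonneg fun e _ =>
        mul_nonneg (sq_nonneg _) (inv_nonneg.mpr (le_of_lt (hQ0 e)))
    have hGbound : ∑ x, w x * ∑ b : Fin m → F, ∑ e : E,
        (push (f x) P b e - (∑ a, P (a, e)) / (Fintype.card F : ℝ) ^ m) ^ 2 * (Q e)⁻¹
        ≤ ε * ∑ a : Fin n → F, ∑ e : E, P (a, e) ^ 2 * (Q e)⁻¹ := by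
      have h4 : ∀ x : X, ∑ b : Fin m → F, ∑ e : E,
          (push (f x) P b e - (∑ a, P (a, e)) / (Fintype.card F : ℝ) ^ m) ^ 2 * (Q e)⁻¹
          = ∑ e : E, (Q e)⁻¹ *
              ∑ b : Fin m → F,
                (push (f x) P b e - (∑ a, P (a, e)) / (Fintype.card F : ℝ) ^ m) ^ 2 := by
        intro x
        rw [Finset.sum_comm]
        refine Finset.sum_congr rfl fun e _ => ?_
        rw [Finset.mul_sum]
        exact Finset.sum_congr rfl fun b _ => by ring
      have h5 : ∑ x, w x * ∑ b : Fin m → F, ∑ e : E,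
          (push (f x) P b e - (∑ a, P (a, e)) / (Fintype.card F : ℝ) ^ m) ^ 2 * (Q e)⁻¹
          = ∑ e : E, (Q e)⁻¹ *
              ∑ x, w x * ∑ b : Fin m → F,
                (push (f x) P b e - (∑ a, P (a, e)) / (Fintype.card F : ℝ) ^ m) ^ 2 := by
        rw [Finset.sum_congr rfl fun x (_ : x ∈ Finset.univ) =>
          congrArg (w x * ·) (h4 x)]
        rw [Finset.sum_congr rfl fun x (_ : x ∈ Finset.univ) => Finset.mul_sum _ _ _,
          Finset.sum_comm]
        refine Finset.sum_congr rfl fun e _ => ?_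
        rw [Finset.mul_sum]
        exact Finset.sum_congr rfl fun x _ => by ring
      rw [h5]
      calc ∑ e : E, (Q e)⁻¹ *
              ∑ x, w x * ∑ b : Fin m → F,
                (push (f x) P b e - (∑ a, P (a, e)) / (Fintype.card F : ℝ) ^ m) ^ 2
          ≤ ∑ e : E, (Q e)⁻¹ * (ε * ∑ a, (P (a, e)) ^ 2) :=
            Finset.sum_le_sum fun e _ => mul_le_mul_of_nonneg_left (hwvar e)
              (inv_nonneg.mpr (le_of_lt (hQ0 e)))
        _ = ∑ e : E, ∑ a : Fin n → F, ε * (P (a, e) ^ 2 * (Q e)⁻¹) := by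
            refine Finset.sum_congr rfl fun e _ => ?_
            rw [Finset.mul_sum, Finset.mul_sum]
            exact Finset.sum_congr rfl fun a _ => by ring
        _ = ∑ a : Fin n → F, ∑ e : E, ε * (P (a, e) ^ 2 * (Q e)⁻¹) := Finset.sum_comm
        _ = ε * ∑ a : Fin n → F, ∑ e : E, P (a, e) ^ 2 * (Q e)⁻¹ := by
            rw [Finset.mul_sum]
            exact Finset.sum_congr rfl fun a _ => (Finset.mul_sum _ _ _).symm
    calc ∑ x, w x *
          ∑ b : Fin m → F, ∑ e : E,
            |push (f x) P b e - (∑ a, P (a, e)) / (Fintype.card F : ℝ) ^ m|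
        ≤ ∑ x, w x * (Real.sqrt ((Fintype.card F : ℝ) ^ m) *
            Real.sqrt (∑ b : Fin m → F, ∑ e : E,
              (push (f x) P b e - (∑ a, P (a, e)) / (Fintype.card F : ℝ) ^ m) ^ 2
                * (Q e)⁻¹)) :=
          Finset.sum_le_sum fun x _ => mul_le_mul_of_nonneg_left (hstep1 x) (hw0 x)
      _ = Real.sqrt ((Fintype.card F : ℝ) ^ m) *
            ∑ x, w x * Real.sqrt (∑ b : Fin m → F, ∑ e : E,
              (push (f x) P b e - (∑ a, P (a, e)) / (Fintype.card F : ℝ) ^ m) ^ 2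
                * (Q e)⁻¹) := by
          rw [Finset.mul_sum]
          exact Finset.sum_congr rfl fun x _ => by ring
      _ ≤ Real.sqrt ((Fintype.card F : ℝ) ^ m) *
            Real.sqrt (∑ x, w x * ∑ b : Fin m → F, ∑ e : E,
              (push (f x) P b e - (∑ a, P (a, e)) / (Fintype.card F : ℝ) ^ m) ^ 2
                * (Q e)⁻¹) :=
          mul_le_mul_of_nonneg_left
            (avg_sqrt w _ hw0 hw1 hGp0) (Real.sqrt_nonneg _)
      _ ≤ Real.sqrt ((Fintype.card F : ℝ) ^ m) *
            Real.sqrt (ε * ∑ a : Fin n → F, ∑ e : E, P (a, e) ^ 2 * (Q e)⁻¹) :=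
          mul_le_mul_of_nonneg_left (Real.sqrt_le_sqrt hGbound) (Real.sqrt_nonneg _)
      _ = Real.sqrt ε * Real.sqrt ((Fintype.card F : ℝ) ^ m) *
            Real.sqrt (∑ a : Fin n → F, ∑ e : E, P (a, e) ^ 2 * (Q e)⁻¹) := by
          rw [Real.sqrt_mul hε]
          ring
  · -- part 2
    intro hP1' hse
    have hH'0 : 0 ≤ ∑ a : Fin n → F, ∑ e : E, P (a, e) ^ 2 * (∑ a', P (a', e))⁻¹ :=
      Finset.sum_nonneg fun a _ => Finset.sum_nonneg fun e _ =>
        mul_nonneg (sq_nonneg _) (inv_nonneg.mpr (le_of_lt (hse e)))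
    have hc1 : (1 : ℝ) ≤ 1 + ε * (Fintype.card F : ℝ) ^ m *
        ∑ a : Fin n → F, ∑ e : E, P (a, e) ^ 2 * (∑ a', P (a', e))⁻¹ := by
      nlinarith [mul_nonneg (mul_nonneg hε (le_of_lt hM)) hH'0]
    have hc0 : (0 : ℝ) < 1 + ε * (Fintype.card F : ℝ) ^ m *
        ∑ a : Fin n → F, ∑ e : E, P (a, e) ^ 2 * (∑ a', P (a', e))⁻¹ :=
      lt_of_lt_of_le one_pos hc1
    refine ⟨?_, ?_⟩
    · -- 2a
      set c : ℝ := 1 + ε * (Fintype.card F : ℝ) ^ m *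
        ∑ a : Fin n → F, ∑ e : E, P (a, e) ^ 2 * (∑ a', P (a', e))⁻¹ with hcdef
      -- total mass of push is 1
      have hsum1 : ∀ x : X, ∑ b : Fin m → F, ∑ e : E, push (f x) P b e = 1 := by
        intro x
        rw [Finset.sum_comm]
        calc ∑ e : E, ∑ b : Fin m → F, push (f x) P b e
            = ∑ e : E, ∑ a, P (a, e) := Finset.sum_congr rfl fun e _ => hsum_push x e
          _ = ∑ a : Fin n → F, ∑ e : E, P (a, e) := Finset.sum_comm
          _ = 1 := by rw [← Fintype.sum_prod_type]; exact hP1'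
      -- pointwise log bound
      have hterm : ∀ (x : X) (b : Fin m → F) (e : E),
          push (f x) P b e *
            Real.log ((Fintype.card F : ℝ) ^ m * push (f x) P b e / (∑ a, P (a, e)))
          ≤ Real.log c * push (f x) P b e
            + ((Fintype.card F : ℝ) ^ m / c) *
                ((push (f x) P b e) ^ 2 * (∑ a, P (a, e))⁻¹)
            - push (f x) P b e := by
        intro x b e
        rcases eq_or_lt_of_le (hpush0 x b e) with h0 | h0
        · rw [← h0]
          simp
        · have hsepos := hse e
          have hu : 0 < (Fintype.card F : ℝ) ^ m * push (f x) P b e / (∑ a, P (a, e)) := by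
            positivity
          have hlog : Real.log ((Fintype.card F : ℝ) ^ m * push (f x) P b e / (∑ a, P (a, e)))
              ≤ Real.log c
                + ((Fintype.card F : ℝ) ^ m * push (f x) P b e / (∑ a, P (a, e))) / c
                - 1 := by
            have h2 := Real.log_le_sub_one_of_pos
              (show 0 < ((Fintype.card F : ℝ) ^ m * push (f x) P b e / (∑ a, P (a, e))) / c by
                positivity)
            rw [Real.log_div (ne_of_gt hu) (ne_of_gt hc0)] at h2
            linarith
          have h3 := mul_le_mul_of_nonneg_left hlog (le_of_lt h0)
          calc push (f x) P b e *
                Real.log ((Fintype.card F : ℝ) ^ m * push (f x) P b e / (∑ a, P (a, e)))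
              ≤ push (f x) P b e * (Real.log c
                  + ((Fintype.card F : ℝ) ^ m * push (f x) P b e / (∑ a, P (a, e))) / c
                  - 1) := h3
            _ = Real.log c * push (f x) P b e
                + ((Fintype.card F : ℝ) ^ m / c) *
                    ((push (f x) P b e) ^ 2 * (∑ a, P (a, e))⁻¹)
                - push (f x) P b e := by
                field_simp
      -- per-hash bound
      have hIx : ∀ x : X,
          ∑ b : Fin m → F, ∑ e : E, push (f x) P b e *
            Real.log ((Fintype.card F : ℝ) ^ m * push (f x) P b e / (∑ a, P (a, e)))
          ≤ Real.log c
            + ((Fintype.card F : ℝ) ^ m / c) *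
                (∑ b : Fin m → F, ∑ e : E, (push (f x) P b e) ^ 2 * (∑ a, P (a, e))⁻¹)
            - 1 := by
        intro x
        calc ∑ b : Fin m → F, ∑ e : E, push (f x) P b e *
              Real.log ((Fintype.card F : ℝ) ^ m * push (f x) P b e / (∑ a, P (a, e)))
            ≤ ∑ b : Fin m → F, ∑ e : E, (Real.log c * push (f x) P b e
                + ((Fintype.card F : ℝ) ^ m / c) *
                    ((push (f x) P b e) ^ 2 * (∑ a, P (a, e))⁻¹)
                - push (f x) P b e) :=
              Finset.sum_le_sum fun b _ => Finset.sum_le_sum fun e _ => hterm x b e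
          _ = Real.log c * (∑ b : Fin m → F, ∑ e : E, push (f x) P b e)
              + ((Fintype.card F : ℝ) ^ m / c) *
                  (∑ b : Fin m → F, ∑ e : E, (push (f x) P b e) ^ 2 * (∑ a, P (a, e))⁻¹)
              - (∑ b : Fin m → F, ∑ e : E, push (f x) P b e) := by
              rw [sum2_split (fun b e => Real.log c * push (f x) P b e)
                (fun b e => ((Fintype.card F : ℝ) ^ m / c) *
                  ((push (f x) P b e) ^ 2 * (∑ a, P (a, e))⁻¹))
                (fun b e => push (f x) P b e),
                sum2_factor (Real.log c) (fun b e => push (f x) P b e),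
                sum2_factor ((Fintype.card F : ℝ) ^ m / c)
                  (fun b e => (push (f x) P b e) ^ 2 * (∑ a, P (a, e))⁻¹)]
          _ = Real.log c
              + ((Fintype.card F : ℝ) ^ m / c) *
                  (∑ b : Fin m → F, ∑ e : E, (push (f x) P b e) ^ 2 * (∑ a, P (a, e))⁻¹)
              - 1 := by rw [hsum1 x]; ring
      -- average of the quadratic term
      have hEG : ∑ x, w x *
            (∑ b : Fin m → F, ∑ e : E, (push (f x) P b e) ^ 2 * (∑ a, P (a, e))⁻¹)
          ≤ 1 / (Fintype.card F : ℝ) ^ m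
            + ε * ∑ a : Fin n → F, ∑ e : E, P (a, e) ^ 2 * (∑ a', P (a', e))⁻¹ := by
        have h4 : ∀ x : X,
            ∑ b : Fin m → F, ∑ e : E, (push (f x) P b e) ^ 2 * (∑ a, P (a, e))⁻¹
            = ∑ e : E, (∑ a, P (a, e))⁻¹ * ∑ b : Fin m → F, (push (f x) P b e) ^ 2 := by
          intro x
          rw [Finset.sum_comm]
          refine Finset.sum_congr rfl fun e _ => ?_
          rw [Finset.mul_sum]
          exact Finset.sum_congr rfl fun b _ => by ring
        have h5 : ∑ x, w x *
            (∑ b : Fin m → F, ∑ e : E, (push (f x) P b e) ^ 2 * (∑ a, P (a, e))⁻¹)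
            = ∑ e : E, (∑ a, P (a, e))⁻¹ *
                ∑ x, w x * ∑ b : Fin m → F, (push (f x) P b e) ^ 2 := by
          rw [Finset.sum_congr rfl fun x (_ : x ∈ Finset.univ) =>
            congrArg (w x * ·) (h4 x)]
          rw [Finset.sum_congr rfl fun x (_ : x ∈ Finset.univ) => Finset.mul_sum _ _ _,
            Finset.sum_comm]
          refine Finset.sum_congr rfl fun e _ => ?_
          rw [Finset.mul_sum]
          exact Finset.sum_congr rfl fun x _ => by ring
        rw [h5]
        calc ∑ e : E, (∑ a, P (a, e))⁻¹ *
                ∑ x, w x * ∑ b : Fin m → F, (push (f x) P b e) ^ 2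
            ≤ ∑ e : E, (∑ a, P (a, e))⁻¹ *
                ((∑ a, P (a, e)) ^ 2 / (Fintype.card F : ℝ) ^ m
                  + ε * ∑ a, (P (a, e)) ^ 2) :=
              Finset.sum_le_sum fun e _ => mul_le_mul_of_nonneg_left (hkeyE e)
                (inv_nonneg.mpr (le_of_lt (hse e)))
          _ = ∑ e : E, ((∑ a, P (a, e)) / (Fintype.card F : ℝ) ^ m
                + ε * ∑ a, P (a, e) ^ 2 * (∑ a', P (a', e))⁻¹) := by
              refine Finset.sum_congr rfl fun e _ => ?_
              have hne : (∑ a, P (a, e)) ≠ 0 := ne_of_gt (hse e)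
              rw [← Finset.sum_mul]
              field_simp
          _ = 1 / (Fintype.card F : ℝ) ^ m
              + ε * ∑ a : Fin n → F, ∑ e : E, P (a, e) ^ 2 * (∑ a', P (a', e))⁻¹ := by
              rw [Finset.sum_add_distrib]
              congr 1
              · rw [← Finset.sum_div]
                have h6 : ∑ e : E, ∑ a, P (a, e) = 1 := by
                  rw [Finset.sum_comm, ← Fintype.sum_prod_type]
                  exact hP1'
                rw [h6]
              · calc ∑ e : E, ε * ∑ a, P (a, e) ^ 2 * (∑ a', P (a', e))⁻¹
                    = ∑ e : E, ∑ a, ε * (P (a, e) ^ 2 * (∑ a', P (a', e))⁻¹) :=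
                      Finset.sum_congr rfl fun e _ => Finset.mul_sum _ _ _
                  _ = ∑ a : Fin n → F, ∑ e : E, ε * (P (a, e) ^ 2 * (∑ a', P (a', e))⁻¹) :=
                      Finset.sum_comm
                  _ = ε * ∑ a : Fin n → F, ∑ e : E, P (a, e) ^ 2 * (∑ a', P (a', e))⁻¹ := by
                      rw [Finset.mul_sum]
                      exact Finset.sum_congr rfl fun a _ => (Finset.mul_sum _ _ _).symm
      -- combine
      calc ∑ x, w x *
            ∑ b : Fin m → F, ∑ e : E, push (f x) P b e *
              Real.log ((Fintype.card F : ℝ) ^ m * push (f x) P b e / (∑ a, P (a, e)))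
          ≤ ∑ x, w x * (Real.log c
              + ((Fintype.card F : ℝ) ^ m / c) *
                  (∑ b : Fin m → F, ∑ e : E, (push (f x) P b e) ^ 2 * (∑ a, P (a, e))⁻¹)
              - 1) :=
            Finset.sum_le_sum fun x _ => mul_le_mul_of_nonneg_left (hIx x) (hw0 x)
        _ = Real.log c
            + ((Fintype.card F : ℝ) ^ m / c) *
                (∑ x, w x *
                  (∑ b : Fin m → F, ∑ e : E, (push (f x) P b e) ^ 2 * (∑ a, P (a, e))⁻¹))
            - 1 := by
            exact avg_affine w hw1 (Real.log c) ((Fintype.card F : ℝ) ^ m / c) 1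
              (fun x => ∑ b : Fin m → F, ∑ e : E,
                (push (f x) P b e) ^ 2 * (∑ a, P (a, e))⁻¹)
        _ ≤ Real.log c
            + ((Fintype.card F : ℝ) ^ m / c) *
                (1 / (Fintype.card F : ℝ) ^ m
                  + ε * ∑ a : Fin n → F, ∑ e : E, P (a, e) ^ 2 * (∑ a', P (a', e))⁻¹)
            - 1 := by
            have h7 : 0 ≤ (Fintype.card F : ℝ) ^ m / c := by positivity
            have h7' := mul_le_mul_of_nonneg_left hEG h7
            linarith
        _ = Real.log c := by
            have h8 : ((Fintype.card F : ℝ) ^ m / c) *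
                (1 / (Fintype.card F : ℝ) ^ m
                  + ε * ∑ a : Fin n → F, ∑ e : E, P (a, e) ^ 2 * (∑ a', P (a', e))⁻¹)
                = 1 := by
              have hcne : c ≠ 0 := ne_of_gt hc0
              field_simp
              rw [hcdef]
              ring
            rw [h8]
            ring
    · -- 2b
      have h9 := Real.log_le_sub_one_of_pos hc0
      linarith
end

section
/- Let P^{AE} be a sub-distribution on A × E and B a finite set with |B| = M. Let (f_x : A → B)_{x∈X} be a universal₂ ensemble over a finite probability space (X,w), i.e. Pr_X[f_X(a₁)=f_X(a₂)] ≤ 1/M for all a₁ ≠ a₂. Then for every s ∈ (0, 1/2], E_X [ d₁'(f_X(A)|E|P^{AE}) ] ≤ 3 · M^s · Σ_{e∈E} ( Σ_{a∈A} P^{AE}(a,e)^{1/(1-s)} )^{1-s} = 3·M^s·e^{φ(s|A|E|P^{AE})}. -/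
open scoped BigOperators

open Finset

open Classical in
lemma lhl_key {A B X : Type*} [Fintype A] [Fintype B] [Nonempty B] [Fintype X]
    (w : X → ℝ) (hw0 : ∀ x, 0 ≤ w x) (hw1 : ∑ x, w x = 1)
    (f : X → A → B)
    (huniv : ∀ a₁ a₂ : A, a₁ ≠ a₂ →
      prOf w (fun x => f x a₁ = f x a₂) ≤ (Fintype.card B : ℝ)⁻¹)
    (g : A → ℝ) (hg : ∀ a, 0 ≤ g a)
    (s : ℝ) (hs0 : 0 < s) (hs1 : s ≤ 1 / 2) :
    ∑ x, w x * ∑ b : B,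
        |(∑ a, if f x a = b then g a else 0) - (∑ a, g a) / (Fintype.card B : ℝ)|
      ≤ 3 * (Fintype.card B : ℝ) ^ s * (∑ a, g a ^ (1 / (1 - s))) ^ (1 - s) := by
  have hM0 : (0:ℝ) < (Fintype.card B : ℝ) := by exact_mod_cast Fintype.card_pos
  set M : ℝ := (Fintype.card B : ℝ) with hMdef
  have h1s : 0 < 1 - s := by linarith
  set r : ℝ := 1 / (1 - s) with hrdef
  have hr0 : 0 < r := by positivity
  have hr2 : r ≤ 2 := by rw [hrdef, div_le_iff₀ h1s]; linarith
  have hr1 : (1:ℝ) ≤ r := by rw [hrdef, le_div_iff₀ h1s]; linarith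
  set C : ℝ := ∑ a, g a ^ r with hCdef
  have hC0 : 0 ≤ C := sum_nonneg fun a _ => Real.rpow_nonneg (hg a) r
  rcases eq_or_lt_of_le hC0 with hC | hC
  · -- C = 0 : everything vanishes
    have hga : ∀ a, g a = 0 := by
      intro a
      by_contra hne
      have hpos : 0 < g a := lt_of_le_of_ne (hg a) (Ne.symm hne)
      have h1 := Real.rpow_pos_of_pos hpos r
      have h2 : g a ^ r ≤ C := Finset.single_le_sum
        (fun a _ => Real.rpow_nonneg (hg a) r) (mem_univ a)
      linarith
    have hRHS : C ^ (1 - s) = 0 := by rw [← hC, Real.zero_rpow (by linarith)]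
    rw [hRHS]
    simp [hga]
  · -- main case : 0 < C
    set v : ℝ := (C / M) ^ (1 - s) with hvdef
    have hv0 : 0 < v := Real.rpow_pos_of_pos (div_pos hC hM0) _
    set g1 : A → ℝ := fun a => if v < g a then g a else 0 with hg1def
    set g2 : A → ℝ := fun a => if v < g a then 0 else g a with hg2def
    have hg10 : ∀ a, 0 ≤ g1 a := by
      intro a; simp only [hg1def]; split_ifs; exacts [hg a, le_rfl]
    have hg20 : ∀ a, 0 ≤ g2 a := by
      intro a; simp only [hg2def]; split_ifs; exacts [le_rfl, hg a]
    have hsplit : ∀ a, g a = g1 a + g2 a := by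
      intro a; simp only [hg1def, hg2def]; split_ifs <;> ring
    have hg2v : ∀ a, g2 a ≤ v := by
      intro a; simp only [hg2def]; split_ifs with h
      exacts [hv0.le, not_lt.mp h]
    set K : ℝ := M ^ s * C ^ (1 - s) with hKdef
    have hK0' : 0 < K :=
      mul_pos (Real.rpow_pos_of_pos hM0 s) (Real.rpow_pos_of_pos hC _)
    have hK0 : 0 ≤ K := hK0'.le
    have hlogv : Real.log v = (1 - s) * (Real.log C - Real.log M) := by
      rw [hvdef, Real.log_rpow (div_pos hC hM0), Real.log_div hC.ne' hM0.ne']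
    have hrs : r * (1 - s) = 1 := by rw [hrdef]; field_simp
    have hv1r : v ^ (1 - r) * C = K := by
      have h1 : 0 < v ^ (1 - r) * C := mul_pos (Real.rpow_pos_of_pos hv0 _) hC
      apply Real.log_injOn_pos (Set.mem_Ioi.mpr h1) (Set.mem_Ioi.mpr hK0')
      rw [Real.log_mul (Real.rpow_pos_of_pos hv0 _).ne' hC.ne', Real.log_rpow hv0,
        hKdef, Real.log_mul (Real.rpow_pos_of_pos hM0 s).ne'
          (Real.rpow_pos_of_pos hC _).ne',
        Real.log_rpow hM0, Real.log_rpow hC, hlogv]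
      linear_combination (-(Real.log C - Real.log M)) * hrs
    have hv2r : M * (v ^ (2 - r) * C) = K ^ 2 := by
      have h1 : 0 < M * (v ^ (2 - r) * C) :=
        mul_pos hM0 (mul_pos (Real.rpow_pos_of_pos hv0 _) hC)
      have h2 : 0 < K ^ 2 := by positivity
      apply Real.log_injOn_pos (Set.mem_Ioi.mpr h1) (Set.mem_Ioi.mpr h2)
      rw [Real.log_mul hM0.ne' (mul_pos (Real.rpow_pos_of_pos hv0 _) hC).ne',
        Real.log_mul (Real.rpow_pos_of_pos hv0 _).ne' hC.ne', Real.log_rpow hv0,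
        Real.log_pow, hKdef, Real.log_mul (Real.rpow_pos_of_pos hM0 s).ne'
          (Real.rpow_pos_of_pos hC _).ne',
        Real.log_rpow hM0, Real.log_rpow hC, hlogv]
      push_cast
      linear_combination (-(Real.log C - Real.log M)) * hrs
    set G1 : ℝ := ∑ a, g1 a with hG1def
    set G2 : ℝ := ∑ a, g2 a with hG2def
    have hG10 : 0 ≤ G1 := sum_nonneg fun a _ => hg10 a
    have hG20 : 0 ≤ G2 := sum_nonneg fun a _ => hg20 a
    have hfiber : ∀ (u : A → ℝ) (x : X),
        ∑ b : B, (∑ a, if f x a = b then u a else 0) = ∑ a, u a := by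
      intro u x; rw [Finset.sum_comm]; simp
    -- Step B : heavy part
    have hG1C : G1 ≤ K := by
      have hle : ∀ a, g1 a ≤ v ^ (1 - r) * g a ^ r := by
        intro a
        simp only [hg1def]; split_ifs with h
        · have hga : 0 < g a := lt_trans hv0 h
          have e1 : g a = g a ^ (1 - r) * g a ^ r := by
            rw [← Real.rpow_add hga]; norm_num
          have h2 : g a ^ (1 - r) ≤ v ^ (1 - r) :=
            Real.rpow_le_rpow_of_nonpos hv0 h.le (by linarith)
          calc g a = g a ^ (1 - r) * g a ^ r := e1
            _ ≤ v ^ (1 - r) * g a ^ r :=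
              mul_le_mul_of_nonneg_right h2 (Real.rpow_nonneg (hg a) r)
        · exact mul_nonneg (Real.rpow_nonneg hv0.le _) (Real.rpow_nonneg (hg a) _)
      calc G1 ≤ ∑ a, v ^ (1 - r) * g a ^ r := Finset.sum_le_sum fun a _ => hle a
        _ = v ^ (1 - r) * C := by rw [hCdef, Finset.mul_sum]
        _ = K := hv1r
    have hstepB : ∀ x, ∑ b : B,
        |(∑ a, if f x a = b then g1 a else 0) - G1 / M| ≤ 2 * K := by
      intro x
      have h1 : ∀ b : B, |(∑ a, if f x a = b then g1 a else 0) - G1 / M|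
          ≤ (∑ a, if f x a = b then g1 a else 0) + G1 / M := by
        intro b
        have hQ : 0 ≤ ∑ a, if f x a = b then g1 a else 0 :=
          sum_nonneg fun a _ => by split_ifs; exacts [hg10 a, le_rfl]
        have hG1M : 0 ≤ G1 / M := by positivity
        rw [abs_le]
        constructor <;> [linarith; linarith]
      calc ∑ b : B, |(∑ a, if f x a = b then g1 a else 0) - G1 / M|
          ≤ ∑ b : B, ((∑ a, if f x a = b then g1 a else 0) + G1 / M) :=
            Finset.sum_le_sum fun b _ => h1 b
        _ = G1 + M * (G1 / M) := by
            rw [Finset.sum_add_distrib, hfiber g1 x, Finset.sum_const, card_univ,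
              nsmul_eq_mul]
        _ = 2 * G1 := by field_simp; ring
        _ ≤ 2 * K := by linarith
    -- Step C : light part
    have hstepC : ∑ x, w x * ∑ b : B,
        |(∑ a, if f x a = b then g2 a else 0) - G2 / M| ≤ K := by
      -- the expansion of the square
      have hexpand : ∀ x, ∑ b : B, ((∑ a, if f x a = b then g2 a else 0) - G2 / M) ^ 2
          = (∑ b : B, (∑ a, if f x a = b then g2 a else 0) ^ 2) - G2 ^ 2 / M := by
        intro x
        have hs' : ∑ b : B, (∑ a, if f x a = b then g2 a else 0) = G2 := hfiber g2 x
        have e : ∀ b : B, ((∑ a, if f x a = b then g2 a else 0) - G2 / M) ^ 2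
            = (∑ a, if f x a = b then g2 a else 0) ^ 2
              - (2 * G2 / M) * (∑ a, if f x a = b then g2 a else 0) + (G2 / M) ^ 2 :=
          fun b => by ring
        rw [Finset.sum_congr rfl fun b _ => e b, Finset.sum_add_distrib,
          Finset.sum_sub_distrib, ← Finset.mul_sum, hs', Finset.sum_const, card_univ,
          nsmul_eq_mul]
        field_simp
        ring
      -- quadratic bound via universality
      have hquad : ∑ x, w x * ∑ b : B, (∑ a, if f x a = b then g2 a else 0) ^ 2
          ≤ (∑ a, g2 a ^ 2) + G2 ^ 2 / M := by
        have hsq : ∀ x, ∑ b : B, (∑ a, if f x a = b then g2 a else 0) ^ 2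
            = ∑ a, ∑ a', (if f x a' = f x a then g2 a * g2 a' else 0) := by
          intro x
          simp only [pow_two, Finset.sum_mul_sum, ite_mul, mul_ite, mul_zero, zero_mul]
          rw [Finset.sum_comm]
          congr 1; funext a
          rw [Finset.sum_comm]
          congr 1; funext a'
          simp [Finset.sum_ite_eq, eq_comm]
        have hswap : ∑ x, w x * ∑ a, ∑ a', (if f x a' = f x a then g2 a * g2 a' else 0)
            = ∑ a, ∑ a', prOf w (fun x => f x a' = f x a) * (g2 a * g2 a') := by
          simp only [Finset.mul_sum]
          rw [Finset.sum_comm]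
          apply Finset.sum_congr rfl; intro a _
          rw [Finset.sum_comm]
          apply Finset.sum_congr rfl; intro a' _
          rw [prOf, Finset.sum_mul]
          apply Finset.sum_congr rfl; intro x _
          split_ifs <;> ring
        have hdiag : ∀ a : A, prOf w (fun x => f x a = f x a) = 1 := by
          intro a; simp [prOf, hw1]
        have hbound : ∀ a : A, ∑ a', prOf w (fun x => f x a' = f x a) * (g2 a * g2 a')
            ≤ g2 a ^ 2 + M⁻¹ * (g2 a * G2) := by
          intro a
          rw [← Finset.add_sum_erase _ _ (mem_univ a), hdiag, one_mul, ← pow_two]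
          have h1 : ∑ a' ∈ univ.erase a,
              prOf w (fun x => f x a' = f x a) * (g2 a * g2 a')
              ≤ ∑ a' ∈ univ.erase a, M⁻¹ * (g2 a * g2 a') := by
            apply Finset.sum_le_sum; intro a' ha'
            have hne : a' ≠ a := (Finset.mem_erase.mp ha').1
            exact mul_le_mul_of_nonneg_right (huniv a' a hne)
              (mul_nonneg (hg20 a) (hg20 a'))
          have h2 : ∑ a' ∈ univ.erase a, M⁻¹ * (g2 a * g2 a')
              ≤ ∑ a' : A, M⁻¹ * (g2 a * g2 a') := by
            apply Finset.sum_le_sum_of_subset_of_nonneg (Finset.subset_univ _)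
            intro a' _ _
            exact mul_nonneg (by positivity) (mul_nonneg (hg20 a) (hg20 a'))
          have h3 : ∑ a' : A, M⁻¹ * (g2 a * g2 a') = M⁻¹ * (g2 a * G2) := by
            rw [← Finset.mul_sum, ← Finset.mul_sum]
          linarith
        calc ∑ x, w x * ∑ b : B, (∑ a, if f x a = b then g2 a else 0) ^ 2
            = ∑ x, w x * ∑ a, ∑ a', (if f x a' = f x a then g2 a * g2 a' else 0) := by
              exact Finset.sum_congr rfl fun x _ => by rw [hsq x]
          _ = ∑ a, ∑ a', prOf w (fun x => f x a' = f x a) * (g2 a * g2 a') := hswap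
          _ ≤ ∑ a, (g2 a ^ 2 + M⁻¹ * (g2 a * G2)) :=
              Finset.sum_le_sum fun a _ => hbound a
          _ = (∑ a, g2 a ^ 2) + G2 ^ 2 / M := by
              rw [Finset.sum_add_distrib]
              congr 1
              rw [← Finset.mul_sum]
              have : ∑ a, g2 a * G2 = G2 * G2 := by rw [← Finset.sum_mul]
              rw [this]
              field_simp
      -- variance bound
      have hvar : ∑ x, w x * ∑ b : B,
          ((∑ a, if f x a = b then g2 a else 0) - G2 / M) ^ 2 ≤ ∑ a, g2 a ^ 2 := by
        calc ∑ x, w x * ∑ b : B, ((∑ a, if f x a = b then g2 a else 0) - G2 / M) ^ 2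
            = ∑ x, (w x * (∑ b : B, (∑ a, if f x a = b then g2 a else 0) ^ 2)
                - w x * (G2 ^ 2 / M)) := by
              apply Finset.sum_congr rfl; intro x _
              rw [hexpand x]; ring
          _ = (∑ x, w x * ∑ b : B, (∑ a, if f x a = b then g2 a else 0) ^ 2)
                - (∑ x, w x) * (G2 ^ 2 / M) := by
              rw [Finset.sum_sub_distrib, Finset.sum_mul]
          _ = (∑ x, w x * ∑ b : B, (∑ a, if f x a = b then g2 a else 0) ^ 2)
                - G2 ^ 2 / M := by rw [hw1, one_mul]
          _ ≤ ∑ a, g2 a ^ 2 := by linarith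
      -- Step E
      have hE : ∑ a, g2 a ^ 2 ≤ v ^ (2 - r) * C := by
        have hle : ∀ a, g2 a ^ 2 ≤ v ^ (2 - r) * g a ^ r := by
          intro a
          rcases eq_or_lt_of_le (hg20 a) with h0 | hpos
          · rw [← h0]
            simpa using mul_nonneg (Real.rpow_nonneg hv0.le _)
              (Real.rpow_nonneg (hg a) _)
          · have hnv : ¬ v < g a := by
              intro h
              rw [hg2def] at hpos; simp only [h, if_pos] at hpos
              exact lt_irrefl 0 hpos
            have hgeq : g2 a = g a := by simp only [hg2def, if_neg hnv]
            have hle2 : g2 a ≤ v := hg2v a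
            calc g2 a ^ 2 = g2 a ^ ((2:ℝ)) := (Real.rpow_two _).symm
              _ = g2 a ^ (r + (2 - r)) := by norm_num
              _ = g2 a ^ r * g2 a ^ (2 - r) := Real.rpow_add hpos r (2 - r)
              _ ≤ g a ^ r * v ^ (2 - r) := by
                  apply mul_le_mul
                  · rw [hgeq]
                  · exact Real.rpow_le_rpow hpos.le hle2 (by linarith)
                  · exact Real.rpow_nonneg hpos.le _
                  · exact Real.rpow_nonneg (hg a) _
              _ = v ^ (2 - r) * g a ^ r := mul_comm _ _
        calc ∑ a, g2 a ^ 2 ≤ ∑ a, v ^ (2 - r) * g a ^ r :=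
              Finset.sum_le_sum fun a _ => hle a
          _ = v ^ (2 - r) * C := by rw [hCdef, Finset.mul_sum]
      -- Cauchy–Schwarz in x
      have hS20 : ∀ x, (0:ℝ) ≤ ∑ b : B,
          |(∑ a, if f x a = b then g2 a else 0) - G2 / M| :=
        fun x => sum_nonneg fun b _ => abs_nonneg _
      set T : ℝ := ∑ x, w x * ∑ b : B,
          |(∑ a, if f x a = b then g2 a else 0) - G2 / M| with hTdef
      have hT0 : 0 ≤ T :=
        sum_nonneg fun x _ => mul_nonneg (hw0 x) (hS20 x)
      have hTsq : T ^ 2 ≤ ∑ x, w x *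
          (∑ b : B, |(∑ a, if f x a = b then g2 a else 0) - G2 / M|) ^ 2 := by
        have hcs := Finset.sum_mul_sq_le_sq_mul_sq univ (fun x => Real.sqrt (w x))
          (fun x => Real.sqrt (w x) *
            ∑ b : B, |(∑ a, if f x a = b then g2 a else 0) - G2 / M|)
        have e1 : ∑ x, Real.sqrt (w x) * (Real.sqrt (w x) *
            ∑ b : B, |(∑ a, if f x a = b then g2 a else 0) - G2 / M|) = T := by
          rw [hTdef]
          apply Finset.sum_congr rfl; intro x _
          rw [← mul_assoc, Real.mul_self_sqrt (hw0 x)]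
        have e2 : ∑ x, Real.sqrt (w x) ^ 2 = 1 := by
          rw [← hw1]
          exact Finset.sum_congr rfl fun x _ => Real.sq_sqrt (hw0 x)
        calc T ^ 2 = (∑ x, Real.sqrt (w x) * (Real.sqrt (w x) *
              ∑ b : B, |(∑ a, if f x a = b then g2 a else 0) - G2 / M|)) ^ 2 := by
              rw [e1]
          _ ≤ (∑ x, Real.sqrt (w x) ^ 2) * ∑ x, (Real.sqrt (w x) *
              ∑ b : B, |(∑ a, if f x a = b then g2 a else 0) - G2 / M|) ^ 2 := hcs
          _ = ∑ x, w x *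
              (∑ b : B, |(∑ a, if f x a = b then g2 a else 0) - G2 / M|) ^ 2 := by
              rw [e2, one_mul]
              apply Finset.sum_congr rfl; intro x _
              rw [mul_pow, Real.sq_sqrt (hw0 x)]
      have hS2sq : ∀ x, (∑ b : B, |(∑ a, if f x a = b then g2 a else 0) - G2 / M|) ^ 2
          ≤ M * ∑ b : B, ((∑ a, if f x a = b then g2 a else 0) - G2 / M) ^ 2 := by
        intro x
        have h := sq_sum_le_card_mul_sum_sq (s := (univ : Finset B))
          (f := fun b => |(∑ a, if f x a = b then g2 a else 0) - G2 / M|)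
        simp only [sq_abs] at h
        calc (∑ b : B, |(∑ a, if f x a = b then g2 a else 0) - G2 / M|) ^ 2
            ≤ (#(univ : Finset B) : ℝ) *
              ∑ b : B, ((∑ a, if f x a = b then g2 a else 0) - G2 / M) ^ 2 := h
          _ = M * ∑ b : B, ((∑ a, if f x a = b then g2 a else 0) - G2 / M) ^ 2 := by
              rw [card_univ]
      have hTK : T ^ 2 ≤ K ^ 2 := by
        calc T ^ 2 ≤ ∑ x, w x *
              (∑ b : B, |(∑ a, if f x a = b then g2 a else 0) - G2 / M|) ^ 2 := hTsq
          _ ≤ ∑ x, w x * (M * ∑ b : B,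
              ((∑ a, if f x a = b then g2 a else 0) - G2 / M) ^ 2) :=
              Finset.sum_le_sum fun x _ =>
                mul_le_mul_of_nonneg_left (hS2sq x) (hw0 x)
          _ = M * ∑ x, w x * ∑ b : B,
              ((∑ a, if f x a = b then g2 a else 0) - G2 / M) ^ 2 := by
              rw [Finset.mul_sum]
              exact Finset.sum_congr rfl fun x _ => by ring
          _ ≤ M * (v ^ (2 - r) * C) :=
              mul_le_mul_of_nonneg_left (le_trans hvar hE) hM0.le
          _ = K ^ 2 := hv2r
      nlinarith [hT0, hK0, hTK]
    -- assemble
    have hsplitQ : ∀ (x : X) (b : B), (∑ a, if f x a = b then g a else 0)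
        = (∑ a, if f x a = b then g1 a else 0) + (∑ a, if f x a = b then g2 a else 0) := by
      intro x b
      rw [← Finset.sum_add_distrib]
      apply Finset.sum_congr rfl; intro a _
      split_ifs with h
      · exact hsplit a
      · ring
    have hG : ∑ a, g a = G1 + G2 := by
      rw [hG1def, hG2def, ← Finset.sum_add_distrib]
      exact Finset.sum_congr rfl fun a _ => hsplit a
    have hstepA : ∀ x, ∑ b : B, |(∑ a, if f x a = b then g a else 0) - (∑ a, g a) / M|
        ≤ (∑ b : B, |(∑ a, if f x a = b then g1 a else 0) - G1 / M|)
          + (∑ b : B, |(∑ a, if f x a = b then g2 a else 0) - G2 / M|) := by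
      intro x
      rw [← Finset.sum_add_distrib]
      apply Finset.sum_le_sum; intro b _
      rw [hsplitQ x b, hG]
      have e : ((∑ a, if f x a = b then g1 a else 0) + (∑ a, if f x a = b then g2 a else 0))
          - (G1 + G2) / M = ((∑ a, if f x a = b then g1 a else 0) - G1 / M)
            + ((∑ a, if f x a = b then g2 a else 0) - G2 / M) := by ring
      rw [e]
      exact abs_add_le _ _
    calc ∑ x, w x * ∑ b : B,
          |(∑ a, if f x a = b then g a else 0) - (∑ a, g a) / M|
        ≤ ∑ x, w x * ((∑ b : B, |(∑ a, if f x a = b then g1 a else 0) - G1 / M|)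
            + (∑ b : B, |(∑ a, if f x a = b then g2 a else 0) - G2 / M|)) :=
          Finset.sum_le_sum fun x _ => mul_le_mul_of_nonneg_left (hstepA x) (hw0 x)
      _ = (∑ x, w x * ∑ b : B, |(∑ a, if f x a = b then g1 a else 0) - G1 / M|)
            + (∑ x, w x * ∑ b : B, |(∑ a, if f x a = b then g2 a else 0) - G2 / M|) := by
          rw [← Finset.sum_add_distrib]
          exact Finset.sum_congr rfl fun x _ => by ring
      _ ≤ (∑ x, w x * (2 * K)) + K := by
          apply add_le_add _ hstepC
          apply Finset.sum_le_sum; intro x _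
          exact mul_le_mul_of_nonneg_left (hstepB x) (hw0 x)
      _ = 2 * K + K := by rw [← Finset.sum_mul, hw1, one_mul]
      _ = 3 * M ^ s * C ^ (1 - s) := by rw [hKdef]; ring

theorem stmt_13 {A B E : Type*} [Fintype A] [Nonempty A] [Fintype B] [Nonempty B]
    [Fintype E] [Nonempty E]
    (P : A × E → ℝ) (hP0 : ∀ x, 0 ≤ P x) (hP1 : ∑ x, P x ≤ 1)
    {X : Type*} [Fintype X] [Nonempty X] (w : X → ℝ)
    (hw0 : ∀ x, 0 ≤ w x) (hw1 : ∑ x, w x = 1)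
    (f : X → A → B)
    (huniv : ∀ a₁ a₂ : A, a₁ ≠ a₂ →
      prOf w (fun x => f x a₁ = f x a₂) ≤ (Fintype.card B : ℝ)⁻¹)
    (s : ℝ) (hs0 : 0 < s) (hs1 : s ≤ 1 / 2) :
    ∑ x, w x *
        ∑ b : B, ∑ e : E, |push (f x) P b e - (∑ a, P (a, e)) / (Fintype.card B : ℝ)| ≤
      3 * (Fintype.card B : ℝ) ^ s *
        ∑ e : E, (∑ a : A, P (a, e) ^ (1 / (1 - s))) ^ (1 - s) := by
  classical
  have hL : ∑ x, w x *
        ∑ b : B, ∑ e : E, |push (f x) P b e - (∑ a, P (a, e)) / (Fintype.card B : ℝ)|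
      = ∑ e : E, ∑ x, w x * ∑ b : B,
        |(∑ a, if f x a = b then P (a, e) else 0)
          - (∑ a, P (a, e)) / (Fintype.card B : ℝ)| := by
    have h1 : ∀ x, w x *
        ∑ b : B, ∑ e : E, |push (f x) P b e - (∑ a, P (a, e)) / (Fintype.card B : ℝ)|
        = ∑ e : E, w x * ∑ b : B,
          |(∑ a, if f x a = b then P (a, e) else 0)
            - (∑ a, P (a, e)) / (Fintype.card B : ℝ)| := by
      intro x
      rw [Finset.sum_comm, Finset.mul_sum]
      apply Finset.sum_congr rfl; intro e _
      congr 1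
    rw [Finset.sum_congr rfl fun x _ => h1 x, Finset.sum_comm]
  rw [hL, Finset.mul_sum]
  apply Finset.sum_le_sum
  intro e _
  exact lhl_key w hw0 hw1 f huniv (fun a => P (a, e)) (fun a => hP0 _) s hs0 hs1
end
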